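/- arXiv:1207.4255 — 12 statements merged into one kernel-verified Lean document; each statement's English description precedes it below -/
import Mathlib

section
/- Let K ≥ 1, and for each k let W^(k) ∈ R^{(N−1)×(N−1)} be symmetric positive definite, u^(k) ∈ R^{N−1}, T^(k) > 0, v^(k) > 0, and let ρ > 0, p > 1, with dual exponent p̄ defined by 1/p + 1/p̄ = 1. If max_n ‖(T^(1) u_n^(1),…,T^(K) u_n^(K))‖_{p̄} ≤ ρ, then the zero tuple (y^(1),…,y^(K)) = (0,…,0) is a minimizer of G(y^(1),…,y^(K)) = Σ_k T^(k) ((1/2) v^(k) y^(k)ᵀ (W^(k))⁻¹ y^(k) + u^(k)ᵀ y^(k)) + ρ Σ_{n=1}^{N−1} ‖(y_n^(1),…,y_n^(K))‖_p over (R^{N−1})^K. -/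
open Matrix

/-- if `max_n ‖(T¹ u_n¹, …, Tᴷ u_nᴷ)‖_{p̄}` (where `p̄` is the dual exponent
of `p`, i.e. `1/p + 1/p̄ = 1`), then the zero tuple minimizes the off-diagonal update
subproblem `G` over `(ℝ^{N−1})^K`. -/
theorem offDiagonal_update_zero_isMinOn (n K : ℕ) (hK : 0 < K)
    (W : Fin K → Matrix (Fin n) (Fin n) ℝ) (hW : ∀ k, (W k).PosDef)
    (u : Fin K → Fin n → ℝ) (T v : Fin K → ℝ)
    (hT : ∀ k, 0 < T k) (hv : ∀ k, 0 < v k)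
    (ρ p pd : ℝ) (hρ : 0 < ρ) (hp : 1 < p) (hpd : 1 / p + 1 / pd = 1)
    (hdual : ∀ i : Fin n, (∑ k, |T k * u k i| ^ pd) ^ (1 / pd) ≤ ρ) :
    IsMinOn
      (fun y : Fin K → Fin n → ℝ =>
        ∑ k, T k * ((1 / 2) * v k * (y k ⬝ᵥ ((W k)⁻¹ *ᵥ y k)) + u k ⬝ᵥ y k)
          + ρ * ∑ i, (∑ k, |y k i| ^ p) ^ (1 / p))
      (Set.univ : Set (Fin K → Fin n → ℝ)) 0 := by
  have hp0 : p ≠ 0 := by positivity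
  have hconj : Real.HolderConjugate p pd := Real.holderConjugate_iff.mpr ⟨hp, by simpa [one_div] using hpd⟩
  rw [isMinOn_iff]
  intro y _
  have hzero : (∑ k, T k * ((1 / 2) * v k * ((0 : Fin K → Fin n → ℝ) k ⬝ᵥ ((W k)⁻¹ *ᵥ (0 : Fin K → Fin n → ℝ) k)) + u k ⬝ᵥ (0 : Fin K → Fin n → ℝ) k)
          + ρ * ∑ i, (∑ k, |(0 : Fin K → Fin n → ℝ) k i| ^ p) ^ (1 / p)) = 0 := by
    simp [Real.zero_rpow hp0, Real.zero_rpow (inv_ne_zero hp0)]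
  simp only [hzero]
  -- quadratic part nonneg
  have hquad : ∀ k, 0 ≤ T k * ((1 / 2) * v k * (y k ⬝ᵥ ((W k)⁻¹ *ᵥ y k))) := by
    intro k
    have h1 : 0 ≤ y k ⬝ᵥ ((W k)⁻¹ *ᵥ y k) := by
      have := ((hW k).inv.posSemidef.dotProduct_mulVec_nonneg (y k))
      simpa using this
    have := (hT k).le
    have := (hv k).le
    positivity
  -- linear + norm part nonneg
  have hlin : 0 ≤ ∑ k, T k * (u k ⬝ᵥ y k) + ρ * ∑ i, (∑ k, |y k i| ^ p) ^ (1 / p) := by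
    have hswap : ∑ k, T k * (u k ⬝ᵥ y k) = ∑ i, ∑ k, (T k * u k i) * y k i := by
      rw [Finset.sum_comm]
      refine Finset.sum_congr rfl fun k _ => ?_
      simp [dotProduct, Finset.mul_sum]
      ring_nf
    rw [hswap, Finset.mul_sum, ← Finset.sum_add_distrib]
    refine Finset.sum_nonneg fun i _ => ?_
    have hH : -(∑ k, (T k * u k i) * y k i) ≤ ρ * (∑ k, |y k i| ^ p) ^ (1 / p) := by
      have h1 : ∑ k, (T k * u k i) * -(y k i) ≤
          (∑ k, |T k * u k i| ^ pd) ^ (1 / pd) * (∑ k, |-(y k i)| ^ p) ^ (1 / p) :=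
        Real.inner_le_Lp_mul_Lq (s := Finset.univ) (f := fun k => T k * u k i) (g := fun k => -(y k i)) hconj.symm
      simp only [abs_neg, mul_neg, Finset.sum_neg_distrib] at h1
      calc -(∑ k, (T k * u k i) * y k i)
          ≤ (∑ k, |T k * u k i| ^ pd) ^ (1 / pd) * (∑ k, |y k i| ^ p) ^ (1 / p) := h1
        _ ≤ ρ * (∑ k, |y k i| ^ p) ^ (1 / p) := by
            refine mul_le_mul_of_nonneg_right (hdual i) ?_
            positivity
    linarith
  calc (0:ℝ) ≤ ∑ k, T k * ((1 / 2) * v k * (y k ⬝ᵥ ((W k)⁻¹ *ᵥ y k))) +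
        (∑ k, T k * (u k ⬝ᵥ y k) + ρ * ∑ i, (∑ k, |y k i| ^ p) ^ (1 / p)) := by
        have := Finset.sum_nonneg (fun k (_ : k ∈ Finset.univ) => hquad k)
        linarith
    _ = ∑ k, T k * ((1 / 2) * v k * (y k ⬝ᵥ ((W k)⁻¹ *ᵥ y k)) + u k ⬝ᵥ y k)
          + ρ * ∑ i, (∑ k, |y k i| ^ p) ^ (1 / p) := by
        simp only [mul_add, Finset.sum_add_distrib]
        ring
end

section
/- Let q ∈ R^K with q_k > 0 for all k, c ∈ R^K, and ρ > 0. If r* minimizes φ(r) = (1/2)(r − c)ᵀ diag(q)⁻¹ (r − c) over the set {r ∈ R^K : ‖r‖_1 ≤ ρ}, then x* = diag(q)⁻¹ (c − r*) minimizes f_∞(x) = (1/2) xᵀ diag(q) x − cᵀ x + ρ ‖x‖_∞ over R^K. -/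
/-- if `r*` minimizes `φ(r) = (1/2)(r − c)ᵀ diag(q)⁻¹ (r − c)` over the
`ℓ₁` ball `{r : ‖r‖₁ ≤ ρ}`, then `x* = diag(q)⁻¹ (c − r*)` minimizes
`f_∞(x) = (1/2) xᵀ diag(q) x − cᵀ x + ρ ‖x‖_∞` over `ℝᴷ`. -/
theorem linf_quad_from_l1_constrained_dual (K : ℕ) (q c : Fin K → ℝ)
    (hq : ∀ k, 0 < q k) (ρ : ℝ) (hρ : 0 < ρ)
    (rs : Fin K → ℝ) (hmem : ∑ k, |rs k| ≤ ρ)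
    (hmin : IsMinOn (fun r : Fin K → ℝ => (1 / 2) * ∑ k, (r k - c k) ^ 2 / q k)
      {r : Fin K → ℝ | ∑ k, |r k| ≤ ρ} rs) :
    IsMinOn
      (fun x : Fin K → ℝ =>
        (1 / 2) * ∑ k, q k * x k ^ 2 - ∑ k, c k * x k + ρ * ⨆ k, |x k|)
      (Set.univ : Set (Fin K → ℝ)) (fun k => (c k - rs k) / q k) := by
  have hq0 : ∀ k, q k ≠ 0 := fun k => (hq k).ne'
  set xs : Fin K → ℝ := fun k => (c k - rs k) / q k with hxsdef
  -- variational inequality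
  have hvar : ∀ r' : Fin K → ℝ, (∑ k, |r' k|) ≤ ρ →
      ∑ k, xs k * r' k ≤ ∑ k, xs k * rs k := by
    intro r' hr'
    set G : ℝ := ∑ k, ((rs k - c k) / q k) * (r' k - rs k) with hGdef
    set A : ℝ := ∑ k, (r' k - rs k) ^ 2 / (2 * q k) with hAdef
    have hA0 : 0 ≤ A := Finset.sum_nonneg fun k _ =>
      div_nonneg (sq_nonneg _) (by linarith [hq k])
    have hquad : ∀ t : ℝ, 0 ≤ t → t ≤ 1 → 0 ≤ t * G + t ^ 2 * A := by
      intro t ht0 ht1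
      have hfeas : (∑ k, |rs k + t * (r' k - rs k)|) ≤ ρ := by
        have hb : ∀ k ∈ Finset.univ, |rs k + t * (r' k - rs k)|
            ≤ (1 - t) * |rs k| + t * |r' k| := by
          intro k _
          have h1 : rs k + t * (r' k - rs k) = (1 - t) * rs k + t * r' k := by ring
          rw [h1]
          calc |(1 - t) * rs k + t * r' k| ≤ |(1 - t) * rs k| + |t * r' k| := abs_add_le _ _
            _ = (1 - t) * |rs k| + t * |r' k| := by
                rw [abs_mul, abs_mul, abs_of_nonneg (by linarith : (0:ℝ) ≤ 1 - t),
                  abs_of_nonneg ht0]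
        have h2 := Finset.sum_le_sum hb
        have h3 : ∑ k, ((1 - t) * |rs k| + t * |r' k|)
            = (1 - t) * ∑ k, |rs k| + t * ∑ k, |r' k| := by
          rw [Finset.sum_add_distrib, Finset.mul_sum, Finset.mul_sum]
        have h4 := mul_le_mul_of_nonneg_left hmem (by linarith : (0:ℝ) ≤ 1 - t)
        have h5 := mul_le_mul_of_nonneg_left hr' ht0
        nlinarith
      have hmin' := isMinOn_iff.mp hmin (fun k => rs k + t * (r' k - rs k)) hfeas
      have hexp : (1 / 2) * ∑ k, ((rs k + t * (r' k - rs k)) - c k) ^ 2 / q k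
          = (1 / 2) * ∑ k, (rs k - c k) ^ 2 / q k + (t * G + t ^ 2 * A) := by
        rw [hGdef, hAdef, Finset.mul_sum, Finset.mul_sum, Finset.mul_sum, Finset.mul_sum,
          ← Finset.sum_add_distrib, ← Finset.sum_add_distrib]
        apply Finset.sum_congr rfl
        intro k _
        field_simp [hq0 k]
        ring
      linarith [hmin', hexp.le, hexp.ge]
    by_contra hlt
    push_neg at hlt
    have hGneg : G < 0 := by
      have hGe : ∑ k, xs k * r' k - ∑ k, xs k * rs k = -G := by
        rw [hGdef, ← Finset.sum_sub_distrib, ← Finset.sum_neg_distrib]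
        apply Finset.sum_congr rfl
        intro k _
        simp only [hxsdef]
        field_simp [hq0 k]
        ring
      linarith
    set t : ℝ := min 1 (-G / (2 * A + 1)) with htdef
    have ht0 : 0 < t := lt_min one_pos (div_pos (by linarith) (by linarith))
    have ht1 : t ≤ 1 := min_le_left _ _
    have ht2 : t * (2 * A + 1) ≤ -G := by
      have hle := min_le_right 1 (-G / (2 * A + 1))
      calc t * (2 * A + 1) ≤ (-G / (2 * A + 1)) * (2 * A + 1) :=
            mul_le_mul_of_nonneg_right hle (by linarith)
        _ = -G := by field_simp
    have hq' := hquad t ht0.le ht1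
    nlinarith [mul_le_mul_of_nonneg_left ht2 ht0.le, mul_pos ht0 ht0,
      mul_nonneg (mul_nonneg ht0.le ht0.le) hA0]
  -- Hölder bound
  have hS : ∀ y : Fin K → ℝ, ∑ k, rs k * y k ≤ ρ * ⨆ k, |y k| := by
    intro y
    have hSnn : (0:ℝ) ≤ ⨆ k, |y k| := Real.iSup_nonneg fun k => abs_nonneg _
    calc ∑ k, rs k * y k ≤ ∑ k, |rs k| * (⨆ j, |y j|) := by
          apply Finset.sum_le_sum
          intro k _
          calc rs k * y k ≤ |rs k * y k| := le_abs_self _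
            _ = |rs k| * |y k| := abs_mul _ _
            _ ≤ |rs k| * ⨆ j, |y j| := by
                apply mul_le_mul_of_nonneg_left _ (abs_nonneg _)
                exact le_ciSup (f := fun j => |y j|) (Set.Finite.bddAbove (Set.finite_range _)) k
      _ = (∑ k, |rs k|) * (⨆ j, |y j|) := by rw [Finset.sum_mul]
      _ ≤ ρ * ⨆ j, |y j| := mul_le_mul_of_nonneg_right hmem hSnn
  -- complementary slackness
  have hD : ∑ k, rs k * xs k = ρ * ⨆ k, |xs k| := by
    refine le_antisymm (hS xs) ?_
    rcases Nat.eq_zero_or_pos K with hK | hK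
    · subst hK
      simp [Real.iSup_of_isEmpty]
    · have hne : Nonempty (Fin K) := ⟨⟨0, hK⟩⟩
      obtain ⟨k0, hk0⟩ := Finite.exists_max (fun k => |xs k|)
      have hsup : (⨆ k, |xs k|) = |xs k0| :=
        le_antisymm (ciSup_le hk0) (le_ciSup (f := fun k => |xs k|) (Set.Finite.bddAbove (Set.finite_range _)) k0)
      set r' : Fin K → ℝ := fun k => if k = k0 then (if 0 ≤ xs k0 then ρ else -ρ) else 0
        with hr'def
      have habs : ∑ k, |r' k| ≤ ρ := by
        have h1 : ∑ k, |r' k| = |r' k0| := by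
          apply Finset.sum_eq_single_of_mem k0 (Finset.mem_univ _)
          intro b _ hb
          simp [hr'def, hb]
        rw [h1]
        by_cases h : 0 ≤ xs k0
        · simp [hr'def, h, abs_of_pos hρ]
        · simp [hr'def, h, abs_neg, abs_of_pos hρ]
      have hsum : ∑ k, xs k * r' k = ρ * |xs k0| := by
        have h1 : ∑ k, xs k * r' k = xs k0 * r' k0 := by
          apply Finset.sum_eq_single_of_mem k0 (Finset.mem_univ _)
          intro b _ hb
          simp [hr'def, hb]
        rw [h1]
        by_cases h : 0 ≤ xs k0
        · simp only [hr'def, if_pos rfl, if_pos h]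
          rw [abs_of_nonneg h]; ring
        · simp only [hr'def, if_pos rfl, if_neg h]
          push_neg at h
          rw [abs_of_neg h]; ring
      have hcomm : ∑ k, xs k * rs k = ∑ k, rs k * xs k :=
        Finset.sum_congr rfl fun k _ => mul_comm _ _
      rw [hsup]
      calc ρ * |xs k0| = ∑ k, xs k * r' k := hsum.symm
        _ ≤ ∑ k, xs k * rs k := hvar r' habs
        _ = ∑ k, rs k * xs k := hcomm
  -- finish
  rw [isMinOn_iff]
  intro x _
  have hlow : -(∑ k, (c k - rs k) ^ 2 / (2 * q k))
      ≤ (1 / 2) * ∑ k, q k * x k ^ 2 - ∑ k, c k * x k + ∑ k, rs k * x k := by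
    have hb : ∀ k ∈ Finset.univ, -((c k - rs k) ^ 2 / (2 * q k))
        ≤ (1 / 2) * (q k * x k ^ 2) - c k * x k + rs k * x k := by
      intro k _
      have h2q : (0:ℝ) < 2 * q k := by linarith [hq k]
      have hpos : 0 ≤ (q k * x k - (c k - rs k)) ^ 2 / (2 * q k) :=
        div_nonneg (sq_nonneg _) h2q.le
      have hid : (q k * x k - (c k - rs k)) ^ 2 / (2 * q k)
          = ((1 / 2) * (q k * x k ^ 2) - c k * x k + rs k * x k)
            + (c k - rs k) ^ 2 / (2 * q k) := by
        field_simp [hq0 k]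
        ring
      rw [hid] at hpos
      linarith
    have h1 := Finset.sum_le_sum hb
    have e1 : ∑ k, ((1 / 2) * (q k * x k ^ 2) - c k * x k + rs k * x k)
        = (1 / 2) * ∑ k, q k * x k ^ 2 - ∑ k, c k * x k + ∑ k, rs k * x k := by
      rw [Finset.sum_add_distrib, Finset.sum_sub_distrib, Finset.mul_sum]
    have e2 : ∑ k, -((c k - rs k) ^ 2 / (2 * q k))
        = -∑ k, (c k - rs k) ^ 2 / (2 * q k) := Finset.sum_neg_distrib _
    linarith
  have heq : (1 / 2) * ∑ k, q k * xs k ^ 2 - ∑ k, c k * xs k + ρ * ⨆ k, |xs k|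
      = -(∑ k, (c k - rs k) ^ 2 / (2 * q k)) := by
    rw [← hD]
    have e3 : ∑ k, ((1 / 2) * (q k * xs k ^ 2) - c k * xs k + rs k * xs k)
        = (1 / 2) * ∑ k, q k * xs k ^ 2 - ∑ k, c k * xs k + ∑ k, rs k * xs k := by
      rw [Finset.sum_add_distrib, Finset.sum_sub_distrib, Finset.mul_sum]
    have e4 : ∀ k ∈ Finset.univ, (1 / 2) * (q k * xs k ^ 2) - c k * xs k + rs k * xs k
        = -((c k - rs k) ^ 2 / (2 * q k)) := by
      intro k _
      simp only [hxsdef]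
      field_simp [hq0 k]
      ring
    calc (1 / 2) * ∑ k, q k * xs k ^ 2 - ∑ k, c k * xs k + ∑ k, rs k * xs k
        = ∑ k, ((1 / 2) * (q k * xs k ^ 2) - c k * xs k + rs k * xs k) := e3.symm
      _ = ∑ k, -((c k - rs k) ^ 2 / (2 * q k)) := Finset.sum_congr rfl e4
      _ = -(∑ k, (c k - rs k) ^ 2 / (2 * q k)) := Finset.sum_neg_distrib _
  have hSx := hS x
  linarith
end

section
/- Let q ∈ R^K with q_k > 0 for all k, c ∈ R^K with c_k ≠ 0 for all k, and ρ > 0 with ‖c‖_1 > ρ. Then any minimizer r* of φ(r) = (1/2)(r − c)ᵀ diag(q)⁻¹ (r − c) over {r ∈ R^K : ‖r‖_1 ≤ ρ} lies in the same orthant as c, i.e. r_k* c_k ≥ 0 for all k. -/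
/-- any minimizer `r*` of `φ(r) = (1/2)(r − c)ᵀ diag(q)⁻¹ (r − c)` over the
`ℓ₁` ball `{r : ‖r‖₁ ≤ ρ}` lies in the same orthant as `c`, i.e. `r*_k c_k ≥ 0` for all `k`. -/
theorem l1_constrained_minimizer_same_orthant (K : ℕ) (q c : Fin K → ℝ)
    (hq : ∀ k, 0 < q k) (hc : ∀ k, c k ≠ 0)
    (ρ : ℝ) (hρ : 0 < ρ) (hcρ : ρ < ∑ k, |c k|)
    (rs : Fin K → ℝ) (hmem : ∑ k, |rs k| ≤ ρ)
    (hmin : IsMinOn (fun r : Fin K → ℝ => (1 / 2) * ∑ k, (r k - c k) ^ 2 / q k)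
      {r : Fin K → ℝ | ∑ k, |r k| ≤ ρ} rs) :
    ∀ k, 0 ≤ rs k * c k := by
  intro k
  by_contra h
  push_neg at h
  set r' := Function.update rs k 0 with hr'
  have habs : ∀ j, |r' j| ≤ |rs j| := by
    intro j
    rcases eq_or_ne j k with rfl | hjk
    · simp [hr']
    · simp [hr', Function.update_of_ne hjk]
  have hmem' : r' ∈ {r : Fin K → ℝ | ∑ j, |r j| ≤ ρ} := by
    simp only [Set.mem_setOf_eq]
    exact le_trans (Finset.sum_le_sum fun j _ => habs j) hmem
  have hkey : (r' k - c k) ^ 2 / q k < (rs k - c k) ^ 2 / q k := by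
    have h1 : (r' k - c k) ^ 2 < (rs k - c k) ^ 2 := by
      have : r' k = 0 := by simp [hr']
      rw [this]
      nlinarith [sq_nonneg (rs k)]
    exact div_lt_div_of_pos_right h1 (hq k)
  have hlt : ∑ j, (r' j - c j) ^ 2 / q j < ∑ j, (rs j - c j) ^ 2 / q j := by
    apply Finset.sum_lt_sum
    · intro j _
      rcases eq_or_ne j k with rfl | hjk
      · exact le_of_lt hkey
      · simp [hr', Function.update_of_ne hjk]
    · exact ⟨k, Finset.mem_univ k, hkey⟩
  have hle := hmin hmem'
  simp only [Set.mem_setOf_eq] at hle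
  linarith
end

section
/- Let q ∈ R^K with q_k > 0 for all k, c ∈ R^K with c_k ≠ 0 for all k, and ρ > 0 with ‖c‖_1 > ρ. If g* minimizes the continuous quadratic knapsack objective Σ_k (1/(2 q_k)) (g_k − |c_k|)² over the set {g ∈ R^K : g ≥ 0 componentwise, Σ_k g_k = ρ}, then r* defined by r_k* = sgn(c_k) g_k* minimizes φ(r) = (1/2)(r − c)ᵀ diag(q)⁻¹ (r − c) over {r ∈ R^K : ‖r‖_1 ≤ ρ}. -/
/-- if `g*` minimizes the continuous quadratic knapsack objective
`∑ k, (1/(2 q k)) (g k − |c k|)²` over `{g : g ≥ 0, ∑ k g k = ρ}`, then `r*` defined by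
`r*_k = sgn(c_k) g*_k` minimizes `φ(r) = (1/2)(r − c)ᵀ diag(q)⁻¹ (r − c)` over the `ℓ₁`
ball `{r : ‖r‖₁ ≤ ρ}`. -/
theorem l1_constrained_from_knapsack (K : ℕ) (q c : Fin K → ℝ)
    (hq : ∀ k, 0 < q k) (hc : ∀ k, c k ≠ 0)
    (ρ : ℝ) (hρ : 0 < ρ) (hcρ : ρ < ∑ k, |c k|)
    (gs : Fin K → ℝ) (hgmem : (∀ k, 0 ≤ gs k) ∧ ∑ k, gs k = ρ)
    (hgmin : IsMinOn (fun g : Fin K → ℝ => ∑ k, 1 / (2 * q k) * (g k - |c k|) ^ 2)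
      {g : Fin K → ℝ | (∀ k, 0 ≤ g k) ∧ ∑ k, g k = ρ} gs) :
    (∑ k, |Real.sign (c k) * gs k| ≤ ρ) ∧
    IsMinOn (fun r : Fin K → ℝ => (1 / 2) * ∑ k, (r k - c k) ^ 2 / q k)
      {r : Fin K → ℝ | ∑ k, |r k| ≤ ρ} (fun k => Real.sign (c k) * gs k) := by
  obtain ⟨hg0, hgsum⟩ := hgmem
  have hsignabs : ∀ k, |Real.sign (c k)| = 1 := by
    intro k
    rcases lt_trichotomy (c k) 0 with h | h | h
    · rw [Real.sign_of_neg h]; norm_num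
    · exact absurd h (hc k)
    · rw [Real.sign_of_pos h]; norm_num
  have habs : ∀ k, |Real.sign (c k) * gs k| = gs k := by
    intro k; rw [abs_mul, hsignabs, one_mul, abs_of_nonneg (hg0 k)]
  have hsumabs : ∑ k, |Real.sign (c k) * gs k| = ρ := by
    rw [Finset.sum_congr rfl (fun k _ => habs k), hgsum]
  refine ⟨le_of_eq hsumabs, ?_⟩
  have hval : ((1:ℝ) / 2) * ∑ k, ((Real.sign (c k) * gs k) - c k) ^ 2 / q k
      = ∑ k, 1 / (2 * q k) * (gs k - |c k|) ^ 2 := by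
    rw [Finset.mul_sum]
    refine Finset.sum_congr rfl fun k _ => ?_
    have hqk : q k ≠ 0 := (hq k).ne'
    have hsq : (Real.sign (c k) * gs k - c k) ^ 2 = (gs k - |c k|) ^ 2 := by
      rcases lt_trichotomy (c k) 0 with h | h | h
      · rw [Real.sign_of_neg h, abs_of_neg h]; ring
      · exact absurd h (hc k)
      · rw [Real.sign_of_pos h, abs_of_pos h]; ring
    rw [hsq]
    field_simp
  intro r hr
  simp only [Set.mem_setOf_eq] at hr
  simp only [Set.mem_setOf_eq]
  rw [hval]
  set ψ : (Fin K → ℝ) → ℝ := fun g => ∑ k, 1 / (2 * q k) * (g k - |c k|) ^ 2 with hψ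
  have step1 : ψ (fun k => |r k|) ≤ (1 / 2) * ∑ k, (r k - c k) ^ 2 / q k := by
    rw [hψ, Finset.mul_sum]
    refine Finset.sum_le_sum fun k _ => ?_
    have hqk : (0:ℝ) < q k := hq k
    have h2 : |(|r k| - |c k|)| ≤ |r k - c k| := abs_abs_sub_abs_le_abs_sub _ _
    have h1 : (|r k| - |c k|) ^ 2 ≤ (r k - c k) ^ 2 := by
      rw [← sq_abs (|r k| - |c k|), ← sq_abs (r k - c k)]
      exact pow_le_pow_left₀ (abs_nonneg _) h2 2
    have heq : (1:ℝ)/2 * ((r k - c k) ^ 2 / q k) = 1 / (2 * q k) * (r k - c k) ^ 2 := by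
      field_simp
    rw [heq]
    exact mul_le_mul_of_nonneg_left h1 (by positivity)
  set S : ℝ := ∑ k, |r k| with hS
  set M : ℝ := ∑ k, max (|r k|) (|c k|) with hM
  have hSM : S ≤ M := Finset.sum_le_sum fun k _ => le_max_left _ _
  have hcM : (∑ k, |c k|) ≤ M := Finset.sum_le_sum fun k _ => le_max_right _ _
  have hD : 0 < M - S := by linarith
  set θ : ℝ := (ρ - S) / (M - S) with hθ
  have hθ0 : 0 ≤ θ := div_nonneg (by linarith) (le_of_lt hD)
  have hθ1 : θ ≤ 1 := by
    rw [hθ, div_le_one hD]; linarith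
  set g' : Fin K → ℝ := fun k => |r k| + θ * (max (|r k|) (|c k|) - |r k|) with hg'
  have hg'0 : ∀ k, 0 ≤ g' k := by
    intro k
    show 0 ≤ |r k| + θ * (max (|r k|) (|c k|) - |r k|)
    have h1 : |r k| ≤ max (|r k|) (|c k|) := le_max_left _ _
    have h2 := abs_nonneg (r k)
    nlinarith
  have hg'sum : ∑ k, g' k = ρ := by
    have h1 : ∑ k, g' k = S + θ * (M - S) := by
      simp only [hg', hS, hM]
      rw [Finset.sum_add_distrib, ← Finset.mul_sum, Finset.sum_sub_distrib]
    rw [h1, hθ]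
    field_simp
    ring
  have step2 : ψ g' ≤ ψ (fun k => |r k|) := by
    rw [hψ]
    refine Finset.sum_le_sum fun k _ => ?_
    have hqk : (0:ℝ) < q k := hq k
    have hmono : (g' k - |c k|) ^ 2 ≤ (|r k| - |c k|) ^ 2 := by
      show (|r k| + θ * (max (|r k|) (|c k|) - |r k|) - |c k|) ^ 2 ≤ _
      rcases max_cases (|r k|) (|c k|) with ⟨hm, _⟩ | ⟨hm, hlt⟩
      · rw [hm]; exact le_of_eq (by ring)
      · rw [hm]
        nlinarith [mul_nonneg hθ0 (sq_nonneg (|c k| - |r k|)),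
          mul_nonneg (mul_nonneg hθ0 (sub_nonneg.mpr hθ1)) (sq_nonneg (|c k| - |r k|))]
    apply mul_le_mul_of_nonneg_left hmono
    positivity
  have step3 : ψ gs ≤ ψ g' := hgmin ⟨hg'0, hg'sum⟩
  calc ψ gs ≤ ψ g' := step3
    _ ≤ ψ (fun k => |r k|) := step2
    _ ≤ _ := step1
end

section
/- Let q ∈ R^K with q_k > 0 for all k, c ∈ R^K with c_k ≠ 0 for all k, and ρ > 0 with ‖c‖_1 > ρ. For ν ∈ R define g(ν) ∈ R^K by g_k(ν) = max(0, |c_k| − ν q_k). If ν satisfies Σ_k g_k(ν) = ρ, then g(ν) is the (unique) minimizer of the continuous quadratic knapsack objective Σ_k (1/(2 q_k)) (g_k − |c_k|)² over the set {g ∈ R^K : g ≥ 0 componentwise, Σ_k g_k = ρ}; conversely, if g(ν) is the minimizer of this problem for some ν, then Σ_k g_k(ν) = ρ. -/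
/-- with `g_k(ν) = max(0, |c_k| − ν q_k)`: if `∑ k g_k(ν) = ρ` then `g(ν)` is the
unique minimizer of the continuous quadratic knapsack objective over
`{g : g ≥ 0, ∑ k g k = ρ}`; conversely, if `g(ν)` is a minimizer of this problem then
`∑ k g_k(ν) = ρ`. -/
theorem knapsack_piecewise_linear_characterization (K : ℕ) (q c : Fin K → ℝ)
    (hq : ∀ k, 0 < q k) (hc : ∀ k, c k ≠ 0)
    (ρ : ℝ) (hρ : 0 < ρ) (hcρ : ρ < ∑ k, |c k|) (ν : ℝ) :
    ((∑ k, max 0 (|c k| - ν * q k) = ρ) →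
      ((∀ k, (0 : ℝ) ≤ max 0 (|c k| - ν * q k)) ∧ ∑ k, max 0 (|c k| - ν * q k) = ρ) ∧
      IsMinOn (fun g : Fin K → ℝ => ∑ k, 1 / (2 * q k) * (g k - |c k|) ^ 2)
        {g : Fin K → ℝ | (∀ k, 0 ≤ g k) ∧ ∑ k, g k = ρ}
        (fun k => max 0 (|c k| - ν * q k)) ∧
      (∀ g : Fin K → ℝ, ((∀ k, 0 ≤ g k) ∧ ∑ k, g k = ρ) →
        IsMinOn (fun g : Fin K → ℝ => ∑ k, 1 / (2 * q k) * (g k - |c k|) ^ 2)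
          {g : Fin K → ℝ | (∀ k, 0 ≤ g k) ∧ ∑ k, g k = ρ} g →
        g = fun k => max 0 (|c k| - ν * q k))) ∧
    ((((∀ k, (0 : ℝ) ≤ max 0 (|c k| - ν * q k)) ∧ ∑ k, max 0 (|c k| - ν * q k) = ρ) ∧
      IsMinOn (fun g : Fin K → ℝ => ∑ k, 1 / (2 * q k) * (g k - |c k|) ^ 2)
        {g : Fin K → ℝ | (∀ k, 0 ≤ g k) ∧ ∑ k, g k = ρ}
        (fun k => max 0 (|c k| - ν * q k))) →
      ∑ k, max 0 (|c k| - ν * q k) = ρ) := by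
  set gν : Fin K → ℝ := fun k => max 0 (|c k| - ν * q k) with hgν
  refine ⟨?_, fun h => h.1.2⟩
  intro hsum
  have hfeas : (∀ k, (0 : ℝ) ≤ gν k) ∧ ∑ k, gν k = ρ :=
    ⟨fun k => le_max_left _ _, hsum⟩
  have key : ∀ g : Fin K → ℝ, (∀ k, 0 ≤ g k) → ∑ k, g k = ρ →
      (∑ k, 1 / (2 * q k) * (gν k - |c k|) ^ 2) + ∑ k, 1 / (2 * q k) * (g k - gν k) ^ 2 ≤
      ∑ k, 1 / (2 * q k) * (g k - |c k|) ^ 2 := by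
    intro g hg hgsum
    have expand : ∀ k, 1 / (2 * q k) * (g k - |c k|) ^ 2 =
        1 / (2 * q k) * (gν k - |c k|) ^ 2 + 1 / (2 * q k) * (g k - gν k) ^ 2 +
          (gν k - |c k|) / q k * (g k - gν k) := by
      intro k
      have hqk : q k ≠ 0 := (hq k).ne'
      field_simp
      ring
    have term : ∀ k, -ν * (g k - gν k) ≤ (gν k - |c k|) / q k * (g k - gν k) := by
      intro k
      rcases le_or_gt (|c k| - ν * q k) 0 with h | h
      · have hg0 : gν k = 0 := by simp [hgν, max_eq_left h]
        rw [hg0]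
        rw [div_mul_eq_mul_div, le_div_iff₀ (hq k)]
        nlinarith [hg k, hq k]
      · have hg0 : gν k = |c k| - ν * q k := max_eq_right h.le
        rw [hg0]
        have : (|c k| - ν * q k - |c k|) / q k = -ν := by
          rw [show |c k| - ν * q k - |c k| = -ν * q k by ring,
            mul_div_assoc, div_self (hq k).ne', mul_one]
        rw [this]
    have h1 : ∑ k, 1 / (2 * q k) * (g k - |c k|) ^ 2 =
        (∑ k, 1 / (2 * q k) * (gν k - |c k|) ^ 2) +
        (∑ k, 1 / (2 * q k) * (g k - gν k) ^ 2) +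
        ∑ k, (gν k - |c k|) / q k * (g k - gν k) := by
      rw [← Finset.sum_add_distrib, ← Finset.sum_add_distrib]
      exact Finset.sum_congr rfl fun k _ => expand k
    have h3 : ∑ k, -ν * (g k - gν k) = 0 := by
      rw [← Finset.mul_sum, Finset.sum_sub_distrib, hgsum, hsum]
      ring
    have h2 : (0 : ℝ) ≤ ∑ k, (gν k - |c k|) / q k * (g k - gν k) := by
      calc (0:ℝ) = ∑ k, -ν * (g k - gν k) := h3.symm
        _ ≤ _ := Finset.sum_le_sum fun k _ => term k
    linarith
  have hnn : ∀ (g : Fin K → ℝ) (k : Fin K), (0:ℝ) ≤ 1 / (2 * q k) * (g k - gν k) ^ 2 := by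
    intro g k
    apply mul_nonneg _ (sq_nonneg _)
    rw [one_div]
    exact inv_nonneg.mpr (by linarith [hq k])
  have hquad : ∀ g : Fin K → ℝ, (0 : ℝ) ≤ ∑ k, 1 / (2 * q k) * (g k - gν k) ^ 2 := by
    intro g
    exact Finset.sum_nonneg fun k _ => hnn g k
  have hmin : IsMinOn (fun g : Fin K → ℝ => ∑ k, 1 / (2 * q k) * (g k - |c k|) ^ 2)
      {g : Fin K → ℝ | (∀ k, 0 ≤ g k) ∧ ∑ k, g k = ρ} gν := by
    rw [isMinOn_iff]
    intro g hg
    show ∑ k, 1 / (2 * q k) * (gν k - |c k|) ^ 2 ≤ ∑ k, 1 / (2 * q k) * (g k - |c k|) ^ 2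
    linarith [key g hg.1 hg.2, hquad g]
  refine ⟨hfeas, hmin, ?_⟩
  intro g hgf hgmin
  have h1 := key g hgf.1 hgf.2
  have h2 : ∑ k, 1 / (2 * q k) * (g k - |c k|) ^ 2 ≤
      ∑ k, 1 / (2 * q k) * (gν k - |c k|) ^ 2 := by
    exact isMinOn_iff.mp hgmin gν hfeas
  have hq0 : ∑ k, 1 / (2 * q k) * (g k - gν k) ^ 2 = 0 :=
    le_antisymm (by linarith) (hquad g)
  have hall := (Finset.sum_eq_zero_iff_of_nonneg
    (fun k _ => hnn g k)).mp hq0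
  funext k
  have hk := hall k (Finset.mem_univ k)
  have hqk : (0:ℝ) < 1 / (2 * q k) := by
    rw [one_div]
    exact inv_pos.mpr (by linarith [hq k])
  have : (g k - gν k) ^ 2 = 0 := by
    rcases mul_eq_zero.mp hk with h | h
    · exact absurd h hqk.ne'
    · exact h
  have := pow_eq_zero_iff (n := 2) (by norm_num) |>.mp this
  have : g k = gν k := by linarith
  simpa [hgν] using this
end

section
/- Let q ∈ R^K with q_k > 0 for all k, c ∈ R^K with c_k ≠ 0 for all k, and ρ > 0 with ‖c‖_1 > ρ. Let π be a permutation of {1,…,K} sorting the breakpoints in decreasing order, i.e. |c_{π_1}|/q_{π_1} ≥ |c_{π_2}|/q_{π_2} ≥ … ≥ |c_{π_K}|/q_{π_K}, with the convention that the (K+1)-st breakpoint equals 0. Suppose k* ∈ {1,…,K} and ν* = (Σ_{k=1}^{k*} |c_{π_k}| − ρ) / (Σ_{k=1}^{k*} q_{π_k}) satisfy |c_{π_{k*}}|/q_{π_{k*}} ≥ ν* ≥ |c_{π_{k*+1}}|/q_{π_{k*+1}}. Then g* defined by g_k* = max(0, |c_k| − ν* q_k) is the minimizer of the continuous quadratic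 knapsack objective Σ_k (1/(2 q_k)) (g_k − |c_k|)² over {g ∈ R^K : g ≥ 0 componentwise, Σ_k g_k = ρ}. -/
/-- with breakpoints `|c_k|/q_k` sorted decreasingly by a permutation `π`, if
`k*` and `ν* = (∑_{k ≤ k*} |c_{π k}| − ρ) / (∑_{k ≤ k*} q_{π k})` satisfy
`|c_{π k*}|/q_{π k*} ≥ ν* ≥ |c_{π (k*+1)}|/q_{π (k*+1)}` (with the `(K+1)`-st breakpoint
taken to be `0`), then `g*_k = max(0, |c_k| − ν* q_k)` minimizes the continuous quadratic
knapsack objective over `{g : g ≥ 0, ∑ k g k = ρ}`. -/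
theorem knapsack_sorted_breakpoints_solution (K : ℕ) (q c : Fin K → ℝ)
    (hq : ∀ k, 0 < q k) (hc : ∀ k, c k ≠ 0)
    (ρ : ℝ) (hρ : 0 < ρ) (hcρ : ρ < ∑ k, |c k|)
    (π : Equiv.Perm (Fin K))
    (hsort : ∀ i j : Fin K, i ≤ j → |c (π j)| / q (π j) ≤ |c (π i)| / q (π i))
    (kstar : Fin K) (νs : ℝ)
    (hνs : νs = (∑ k ∈ Finset.Iic kstar, |c (π k)| - ρ) / ∑ k ∈ Finset.Iic kstar, q (π k))
    (hub : νs ≤ |c (π kstar)| / q (π kstar))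
    (hlb : ∀ j : Fin K, kstar < j → |c (π j)| / q (π j) ≤ νs)
    (hlb0 : 0 ≤ νs) :
    ((∀ k, (0 : ℝ) ≤ max 0 (|c k| - νs * q k)) ∧ ∑ k, max 0 (|c k| - νs * q k) = ρ) ∧
    IsMinOn (fun g : Fin K → ℝ => ∑ k, 1 / (2 * q k) * (g k - |c k|) ^ 2)
      {g : Fin K → ℝ | (∀ k, 0 ≤ g k) ∧ ∑ k, g k = ρ}
      (fun k => max 0 (|c k| - νs * q k)) := by
  set m : Fin K → ℝ := fun k => max 0 (|c k| - νs * q k) with hm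
  -- sum of q over Iic is positive
  have hqsum : 0 < ∑ k ∈ Finset.Iic kstar, q (π k) :=
    Finset.sum_pos (fun k _ => hq _) ⟨kstar, Finset.mem_Iic.mpr le_rfl⟩
  -- feasibility sum
  have hsumρ : ∑ k, m k = ρ := by
    have h1 : ∑ k, m (π k) = ∑ k, m k := Equiv.sum_comp π m
    rw [← h1, ← Finset.sum_add_sum_compl (Finset.Iic kstar) (fun k => m (π k))]
    have h2 : ∀ k ∈ Finset.Iic kstar, m (π k) = |c (π k)| - νs * q (π k) := by
      intro k hk
      have hk' : k ≤ kstar := Finset.mem_Iic.mp hk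
      have h5 : νs ≤ |c (π k)| / q (π k) := le_trans hub (hsort k kstar hk')
      have h6 : νs * q (π k) ≤ |c (π k)| := (le_div_iff₀ (hq _)).mp h5
      exact max_eq_right (by linarith)
    have h3 : ∀ k ∈ (Finset.Iic kstar)ᶜ, m (π k) = 0 := by
      intro k hk
      have hk' : kstar < k := by
        simpa [Finset.mem_Iic, not_le] using Finset.mem_compl.mp hk
      have h6 : |c (π k)| ≤ νs * q (π k) := (div_le_iff₀ (hq _)).mp (hlb k hk')
      exact max_eq_left (by linarith)
    rw [Finset.sum_congr rfl h2, Finset.sum_congr rfl h3, Finset.sum_const_zero, add_zero,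
      Finset.sum_sub_distrib, ← Finset.mul_sum, hνs, div_mul_cancel₀ _ hqsum.ne']
    ring
  have hnonneg : ∀ k, (0:ℝ) ≤ m k := fun k => le_max_left _ _
  refine ⟨⟨hnonneg, hsumρ⟩, ?_⟩
  rw [isMinOn_iff]
  rintro g ⟨hg0, hgρ⟩
  -- per-term inequality
  have hterm : ∀ k : Fin K,
      1 / (2 * q k) * (m k - |c k|) ^ 2 - νs * (g k - m k)
        ≤ 1 / (2 * q k) * (g k - |c k|) ^ 2 := by
    intro k
    have hqk := hq k
    have hA : -νs * q k * (g k - m k) ≤ (m k - |c k|) * (g k - m k) := by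
      rcases le_or_gt (|c k| - νs * q k) 0 with h | h
      · have hmk : m k = 0 := max_eq_left h
        have hgk := hg0 k
        rw [hmk]
        nlinarith
      · have hmk : m k = |c k| - νs * q k := max_eq_right h.le
        rw [hmk]; apply le_of_eq; ring
    have key : (m k - |c k|) ^ 2 + 2 * q k * (-νs * (g k - m k))
        ≤ (g k - |c k|) ^ 2 := by nlinarith [sq_nonneg (g k - m k)]
    calc 1 / (2 * q k) * (m k - |c k|) ^ 2 - νs * (g k - m k)
        = 1 / (2 * q k) * ((m k - |c k|) ^ 2 + 2 * q k * (-νs * (g k - m k))) := by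
          field_simp; ring
      _ ≤ 1 / (2 * q k) * (g k - |c k|) ^ 2 :=
          mul_le_mul_of_nonneg_left key (by positivity)
  have hsum := Finset.sum_le_sum (fun k (_ : k ∈ Finset.univ) => hterm k)
  simp only [Finset.sum_sub_distrib, ← Finset.mul_sum] at hsum
  rw [hgρ, hsumρ] at hsum
  simpa using hsum
end

section
/- Let q ∈ R^K with q_k > 0 for all k, c ∈ R^K, and ρ > 0, and consider f_∞(x) = (1/2) xᵀ diag(q) x − cᵀ x + ρ ‖x‖_∞. (i) If ‖c‖_1 ≤ ρ, then x* = 0 minimizes f_∞ over R^K. (ii) If ‖c‖_1 > ρ and c_k ≠ 0 for all k, let π be a permutation sorting |c_{π_1}|/q_{π_1} ≥ … ≥ |c_{π_K}|/q_{π_K} (with (K+1)-st breakpoint 0), and let k* and ν* = (Σ_{k=1}^{k*} |c_{π_k}| − ρ)/(Σ_{k=1}^{k*} q_{π_k}) satisfy |c_{π_{k*}}|/q_{π_{k*}} ≥ ν* ≥ |c_{π_{k*+1}}|/q_{π_{k*+1}}. Then the vector x* defined by x*_{π_k} = c_{π_k}/q_{π_k} for k > k* and x*_{π_k} = sgn(c_{π_k})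 ν* for k ≤ k* minimizes f_∞ over R^K. -/
/-- the minimizer of the `ℓ_∞` regularized separable quadratic objective
`f_∞(x) = (1/2) xᵀ diag(q) x − cᵀ x + ρ ‖x‖_∞`:
(i) if `‖c‖₁ ≤ ρ` then `x* = 0` minimizes `f_∞`;
(ii) if `‖c‖₁ > ρ`, all `c_k ≠ 0`, the breakpoints are sorted decreasingly by `π`, and
`k*, ν*` satisfy the bracketing condition, then `x*` given by `x*_{π k} = c_{π k}/q_{π k}` for
`k > k*` and `x*_{π k} = sgn(c_{π k}) ν*` for `k ≤ k*` minimizes `f_∞`. -/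
theorem linf_quad_solution (K : ℕ) (q c : Fin K → ℝ)
    (hq : ∀ k, 0 < q k) (ρ : ℝ) (hρ : 0 < ρ) :
    ((∑ k, |c k| ≤ ρ) →
      IsMinOn
        (fun x : Fin K → ℝ =>
          (1 / 2) * ∑ k, q k * x k ^ 2 - ∑ k, c k * x k + ρ * ⨆ k, |x k|)
        (Set.univ : Set (Fin K → ℝ)) 0) ∧
    (ρ < ∑ k, |c k| → (∀ k, c k ≠ 0) →
      ∀ π : Equiv.Perm (Fin K),
        (∀ i j : Fin K, i ≤ j → |c (π j)| / q (π j) ≤ |c (π i)| / q (π i)) →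
        ∀ (kstar : Fin K) (νs : ℝ),
          νs = (∑ k ∈ Finset.Iic kstar, |c (π k)| - ρ) /
              ∑ k ∈ Finset.Iic kstar, q (π k) →
          νs ≤ |c (π kstar)| / q (π kstar) →
          (∀ j : Fin K, kstar < j → |c (π j)| / q (π j) ≤ νs) →
          0 ≤ νs →
          IsMinOn
            (fun x : Fin K → ℝ =>
              (1 / 2) * ∑ k, q k * x k ^ 2 - ∑ k, c k * x k + ρ * ⨆ k, |x k|)
            (Set.univ : Set (Fin K → ℝ))
            (fun i => if kstar < π.symm i then c i / q i else Real.sign (c i) * νs)) := by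
  classical
  have habs : ∀ (x : Fin K → ℝ) (k : Fin K), |x k| ≤ ⨆ j, |x j| := fun x k =>
    le_ciSup (f := fun j => |x j|) (Set.Finite.bddAbove (Set.finite_range _)) k
  have hMnn : ∀ x : Fin K → ℝ, 0 ≤ ⨆ j, |x j| := fun x =>
    Real.iSup_nonneg fun k => abs_nonneg _
  constructor
  · -- part (i)
    intro h
    rw [isMinOn_iff]
    intro x _
    have h0 : (⨆ _ : Fin K, (0:ℝ)) = 0 :=
      le_antisymm (Real.iSup_le (fun _ => le_rfl) le_rfl)
        (Real.iSup_nonneg fun _ => le_rfl)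
    have hqx : 0 ≤ ∑ k, q k * x k ^ 2 :=
      Finset.sum_nonneg fun k _ => mul_nonneg (hq k).le (sq_nonneg _)
    have hcx : ∑ k, c k * x k ≤ ρ * ⨆ j, |x j| := by
      calc ∑ k, c k * x k ≤ ∑ k, |c k| * ⨆ j, |x j| := by
            apply Finset.sum_le_sum
            intro k _
            calc c k * x k ≤ |c k * x k| := le_abs_self _
              _ = |c k| * |x k| := abs_mul _ _
              _ ≤ |c k| * ⨆ j, |x j| :=
                  mul_le_mul_of_nonneg_left (habs x k) (abs_nonneg _)
        _ = (∑ k, |c k|) * ⨆ j, |x j| := (Finset.sum_mul _ _ _).symm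
        _ ≤ ρ * ⨆ j, |x j| := mul_le_mul_of_nonneg_right h (hMnn x)
    simp only [Pi.zero_apply, abs_zero, h0, mul_zero, zero_pow, Finset.sum_const_zero,
      sub_zero, add_zero, ne_eq, OfNat.ofNat_ne_zero, not_false_eq_true]
    linarith
  · -- part (ii)
    intro hρc hc π hsort kstar νs hνs hν1 hν2 hν0
    rw [isMinOn_iff]
    intro x _
    set xs : Fin K → ℝ :=
      fun i => if kstar < π.symm i then c i / q i else Real.sign (c i) * νs with hxsdef
    set M := ⨆ j, |x j| with hMdef
    -- sign facts
    have hsgn : ∀ i, Real.sign (c i) * c i = |c i| ∧ |Real.sign (c i)| = 1 := by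
      intro i
      rcases lt_trichotomy (c i) 0 with h | h | h
      · rw [Real.sign_of_neg h]
        constructor
        · rw [abs_of_neg h]; ring
        · norm_num
      · exact absurd h (hc i)
      · rw [Real.sign_of_pos h]
        constructor
        · rw [abs_of_pos h]; ring
        · norm_num
    have hact : ∀ k : Fin K, k ≤ kstar → q (π k) * νs ≤ |c (π k)| := by
      intro k hk
      have h1 : νs ≤ |c (π k)| / q (π k) := le_trans hν1 (hsort k kstar hk)
      have h2 := (le_div_iff₀ (hq (π k))).mp h1
      linarith
    have hS : 0 < ∑ k ∈ Finset.Iic kstar, q (π k) :=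
      Finset.sum_pos (fun k _ => hq (π k)) ⟨kstar, Finset.mem_Iic.mpr le_rfl⟩
    have hνs' : νs * (∑ k ∈ Finset.Iic kstar, q (π k))
        = (∑ k ∈ Finset.Iic kstar, |c (π k)|) - ρ := by
      rw [hνs]; field_simp
    have hsum : ∑ k ∈ Finset.Iic kstar, (|c (π k)| - q (π k) * νs) = ρ := by
      rw [Finset.sum_sub_distrib]
      have : ∑ k ∈ Finset.Iic kstar, q (π k) * νs
          = (∑ k ∈ Finset.Iic kstar, q (π k)) * νs := by
        rw [Finset.sum_mul]
      rw [this]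
      linarith
    have hxs_active : ∀ k : Fin K, k ≤ kstar → xs (π k) = Real.sign (c (π k)) * νs := by
      intro k hk
      simp only [hxsdef, Equiv.symm_apply_apply]
      rw [if_neg (not_lt.mpr hk)]
    have hxs_inactive : ∀ k : Fin K, kstar < k → xs (π k) = c (π k) / q (π k) := by
      intro k hk
      simp only [hxsdef, Equiv.symm_apply_apply]
      rw [if_pos hk]
    have hMxs : (⨆ k, |xs k|) = νs := by
      apply le_antisymm
      · apply Real.iSup_le _ hν0
        intro i
        rcases lt_or_ge kstar (π.symm i) with h | h
        · have hxi : xs i = c i / q i := by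
            simp only [hxsdef]; rw [if_pos h]
          rw [hxi, abs_div, abs_of_pos (hq i)]
          have := hν2 (π.symm i) h
          simpa using this
        · have hxi : xs i = Real.sign (c i) * νs := by
            simp only [hxsdef]; rw [if_neg (not_lt.mpr h)]
          rw [hxi, abs_mul, (hsgn i).2, one_mul, abs_of_nonneg hν0]
      · have h1 := habs xs (π kstar)
        rw [hxs_active kstar le_rfl, abs_mul, (hsgn (π kstar)).2, one_mul,
          abs_of_nonneg hν0] at h1
        exact h1
    -- the key subgradient inequality
    have hDsum : 0 ≤ ∑ j, (q j * xs j - c j) * (x j - xs j) + ρ * M - ρ * νs := by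
      have hre : ∑ j, (q j * xs j - c j) * (x j - xs j)
          = ∑ k, (q (π k) * xs (π k) - c (π k)) * (x (π k) - xs (π k)) :=
        (Equiv.sum_comp π fun j => (q j * xs j - c j) * (x j - xs j)).symm
      rw [hre, ← Finset.sum_add_sum_compl (Finset.Iic kstar)]
      have hcompl : ∑ k ∈ (Finset.Iic kstar)ᶜ,
          (q (π k) * xs (π k) - c (π k)) * (x (π k) - xs (π k)) = 0 := by
        apply Finset.sum_eq_zero
        intro k hk
        have hk' : kstar < k := by
          simp only [Finset.mem_compl, Finset.mem_Iic, not_le] at hk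
          exact hk
        rw [hxs_inactive k hk']
        have hz : q (π k) * (c (π k) / q (π k)) - c (π k) = 0 := by
          rw [mul_comm, div_mul_cancel₀ _ (hq (π k)).ne', sub_self]
        rw [hz, zero_mul]
      rw [hcompl, add_zero]
      have hterm : ∀ k ∈ Finset.Iic kstar,
          (|c (π k)| - q (π k) * νs) * (νs - M) ≤
            (q (π k) * xs (π k) - c (π k)) * (x (π k) - xs (π k)) := by
        intro k hk
        have hk' : k ≤ kstar := Finset.mem_Iic.mp hk
        rw [hxs_active k hk']
        obtain ⟨hs1, hs2⟩ := hsgn (π k)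
        have hss : Real.sign (c (π k)) * Real.sign (c (π k)) = 1 := by
          have h3 := abs_mul_abs_self (Real.sign (c (π k)))
          rw [hs2] at h3
          linarith
        have ha0 : 0 ≤ |c (π k)| - q (π k) * νs := by
          have := hact k hk'; linarith
        have hd : q (π k) * (Real.sign (c (π k)) * νs) - c (π k)
            = Real.sign (c (π k)) * (q (π k) * νs - |c (π k)|) := by
          linear_combination c (π k) * hss - Real.sign (c (π k)) * hs1
        have hda : |q (π k) * (Real.sign (c (π k)) * νs) - c (π k)|
            = |c (π k)| - q (π k) * νs := by
          rw [hd, abs_mul, hs2, one_mul, abs_of_nonpos (by linarith)]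
          ring
        have hdx : -((|c (π k)| - q (π k) * νs) * M)
            ≤ (q (π k) * (Real.sign (c (π k)) * νs) - c (π k)) * x (π k) := by
          have h1 : |(q (π k) * (Real.sign (c (π k)) * νs) - c (π k)) * x (π k)|
              ≤ (|c (π k)| - q (π k) * νs) * M := by
            rw [abs_mul, hda]
            exact mul_le_mul_of_nonneg_left (habs x (π k)) ha0
          have h2 := neg_abs_le
            ((q (π k) * (Real.sign (c (π k)) * νs) - c (π k)) * x (π k))
          linarith
        have hexp : (q (π k) * (Real.sign (c (π k)) * νs) - c (π k))
              * (x (π k) - Real.sign (c (π k)) * νs)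
            = (q (π k) * (Real.sign (c (π k)) * νs) - c (π k)) * x (π k)
              + (|c (π k)| - q (π k) * νs) * νs := by
          linear_combination (-(q (π k) * νs * νs)) * hss + νs * hs1
        rw [hexp]
        nlinarith [hdx]
      have hsum2 : ρ * (νs - M) ≤ ∑ k ∈ Finset.Iic kstar,
          (q (π k) * xs (π k) - c (π k)) * (x (π k) - xs (π k)) := by
        calc ρ * (νs - M)
            = (∑ k ∈ Finset.Iic kstar, (|c (π k)| - q (π k) * νs)) * (νs - M) := by
              rw [hsum]
          _ = ∑ k ∈ Finset.Iic kstar, (|c (π k)| - q (π k) * νs) * (νs - M) :=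
              Finset.sum_mul _ _ _
          _ ≤ _ := Finset.sum_le_sum hterm
      linarith
    -- per-coordinate convexity bound and assembly
    have hquad : ∀ k : Fin K,
        1 / 2 * (q k * xs k ^ 2) - c k * xs k + (q k * xs k - c k) * (x k - xs k)
          ≤ 1 / 2 * (q k * x k ^ 2) - c k * x k := by
      intro k
      nlinarith [sq_nonneg (x k - xs k), (hq k).le]
    have hmain : ∑ k, (1 / 2 * (q k * xs k ^ 2) - c k * xs k
          + (q k * xs k - c k) * (x k - xs k))
        ≤ ∑ k, (1 / 2 * (q k * x k ^ 2) - c k * x k) :=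
      Finset.sum_le_sum fun k _ => hquad k
    have e1 : ∑ k, (1 / 2 * (q k * xs k ^ 2) - c k * xs k
          + (q k * xs k - c k) * (x k - xs k))
        = 1 / 2 * (∑ k, q k * xs k ^ 2) - (∑ k, c k * xs k)
          + ∑ k, (q k * xs k - c k) * (x k - xs k) := by
      rw [Finset.sum_add_distrib, Finset.sum_sub_distrib, ← Finset.mul_sum]
    have e2 : ∑ k, (1 / 2 * (q k * x k ^ 2) - c k * x k)
        = 1 / 2 * (∑ k, q k * x k ^ 2) - (∑ k, c k * x k) := by
      rw [Finset.sum_sub_distrib, ← Finset.mul_sum]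
    rw [e1, e2] at hmain
    rw [hMxs]
    linarith
end

section
/- Let q ∈ R^K with q_k > 0 for all k, c ∈ R^K, and ρ > 0. If r* minimizes φ(r) = (1/2)(r − c)ᵀ diag(q)⁻¹ (r − c) over the Euclidean ball {r ∈ R^K : ‖r‖_2 ≤ ρ}, then x* = diag(q)⁻¹ (c − r*) minimizes f_2(x) = (1/2) xᵀ diag(q) x − cᵀ x + ρ ‖x‖_2 over R^K. -/
private lemma norm_eq_sqrt_sum' {K : ℕ} (v : Fin K → ℝ) :
    ‖(WithLp.equiv 2 (Fin K → ℝ)).symm v‖ = Real.sqrt (∑ k, v k ^ 2) := by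
  rw [EuclideanSpace.norm_eq]
  congr 1
  refine Finset.sum_congr rfl fun k _ => ?_
  simp [Real.norm_eq_abs, sq_abs]

private lemma cs_sum' {K : ℕ} (a b : Fin K → ℝ) :
    ∑ k, a k * b k ≤ Real.sqrt (∑ k, a k ^ 2) * Real.sqrt (∑ k, b k ^ 2) := by
  have h := real_inner_le_norm ((WithLp.equiv 2 (Fin K → ℝ)).symm a)
    ((WithLp.equiv 2 (Fin K → ℝ)).symm b)
  rw [norm_eq_sqrt_sum', norm_eq_sqrt_sum'] at h
  simpa [PiLp.inner_apply, RCLike.inner_apply, conj_trivial, mul_comm] using h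

private lemma comb_mem' {K : ℕ} (a b : Fin K → ℝ) (t ρ : ℝ) (ht0 : 0 ≤ t) (ht1 : t ≤ 1)
    (ha : Real.sqrt (∑ k, a k ^ 2) ≤ ρ) (hb : Real.sqrt (∑ k, b k ^ 2) ≤ ρ) :
    Real.sqrt (∑ k, (a k + t * (b k - a k)) ^ 2) ≤ ρ := by
  have hid : (WithLp.equiv 2 (Fin K → ℝ)).symm (fun k => a k + t * (b k - a k)) =
      (1 - t) • (WithLp.equiv 2 (Fin K → ℝ)).symm a + t • (WithLp.equiv 2 (Fin K → ℝ)).symm b := by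
    ext k
    simp
    ring
  have h := norm_eq_sqrt_sum' (fun k => a k + t * (b k - a k))
  rw [hid] at h
  rw [← h]
  calc ‖(1 - t) • (WithLp.equiv 2 (Fin K → ℝ)).symm a + t • (WithLp.equiv 2 (Fin K → ℝ)).symm b‖
      ≤ ‖(1 - t) • (WithLp.equiv 2 (Fin K → ℝ)).symm a‖ + ‖t • (WithLp.equiv 2 (Fin K → ℝ)).symm b‖ :=
        norm_add_le _ _
    _ = (1 - t) * ‖(WithLp.equiv 2 (Fin K → ℝ)).symm a‖ + t * ‖(WithLp.equiv 2 (Fin K → ℝ)).symm b‖ := by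
        rw [norm_smul, norm_smul, Real.norm_of_nonneg (by linarith), Real.norm_of_nonneg ht0]
    _ ≤ (1 - t) * ρ + t * ρ := by
        rw [norm_eq_sqrt_sum', norm_eq_sqrt_sum']
        have h1 := mul_le_mul_of_nonneg_left ha (by linarith : (0:ℝ) ≤ 1 - t)
        have h2 := mul_le_mul_of_nonneg_left hb ht0
        linarith
    _ = ρ := by ring

/-- if `r*` minimizes `φ(r) = (1/2)(r − c)ᵀ diag(q)⁻¹ (r − c)` over the
Euclidean ball `{r : ‖r‖₂ ≤ ρ}`, then `x* = diag(q)⁻¹ (c − r*)` minimizes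
`f₂(x) = (1/2) xᵀ diag(q) x − cᵀ x + ρ ‖x‖₂` over `ℝᴷ`. -/
theorem l2_quad_from_trust_region_dual (K : ℕ) (q c : Fin K → ℝ)
    (hq : ∀ k, 0 < q k) (ρ : ℝ) (hρ : 0 < ρ)
    (rs : Fin K → ℝ) (hmem : Real.sqrt (∑ k, rs k ^ 2) ≤ ρ)
    (hmin : IsMinOn (fun r : Fin K → ℝ => (1 / 2) * ∑ k, (r k - c k) ^ 2 / q k)
      {r : Fin K → ℝ | Real.sqrt (∑ k, r k ^ 2) ≤ ρ} rs) :
    IsMinOn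
      (fun x : Fin K → ℝ =>
        (1 / 2) * ∑ k, q k * x k ^ 2 - ∑ k, c k * x k + ρ * Real.sqrt (∑ k, x k ^ 2))
      (Set.univ : Set (Fin K → ℝ)) (fun k => (c k - rs k) / q k) := by
  have hq' : ∀ k, q k ≠ 0 := fun k => (hq k).ne'
  set xs : Fin K → ℝ := fun k => (c k - rs k) / q k with hxsdef
  set N := Real.sqrt (∑ k, xs k ^ 2) with hNdef
  have hN0 : 0 ≤ N := Real.sqrt_nonneg _
  have hNsq : N ^ 2 = ∑ k, xs k ^ 2 := Real.sq_sqrt (by positivity)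
  -- KKT / complementarity: ρ * N ≤ ∑ rs * xs
  have key : ρ * N ≤ ∑ k, rs k * xs k := by
    rcases eq_or_lt_of_le hN0 with h0 | hpos
    · have hsum : ∑ k, xs k ^ 2 = 0 := by rw [← hNsq, ← h0]; ring
      have hx0 : ∀ k, xs k = 0 := by
        intro k
        have h := (Finset.sum_eq_zero_iff_of_nonneg
          (fun k _ => sq_nonneg (xs k))).mp hsum k (Finset.mem_univ k)
        exact (pow_eq_zero_iff two_ne_zero).mp h
      have hz : ∑ k, rs k * xs k = 0 :=
        Finset.sum_eq_zero fun k _ => by rw [hx0 k, mul_zero]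
      rw [hz, ← h0, mul_zero]
    · set rhat : Fin K → ℝ := fun k => ρ * xs k / N with hrhatdef
      have hrhatmem : Real.sqrt (∑ k, rhat k ^ 2) ≤ ρ := by
        have h1 : ∑ k, rhat k ^ 2 = ρ ^ 2 := by
          have : ∀ k, rhat k ^ 2 = ρ ^ 2 / N ^ 2 * xs k ^ 2 := by
            intro k; simp only [hrhatdef]; field_simp
          rw [Finset.sum_congr rfl fun k _ => this k, ← Finset.mul_sum, ← hNsq]
          field_simp
        rw [h1, Real.sqrt_sq hρ.le]
      set A := ∑ k, (rhat k - rs k) * xs k with hAdef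
      set B := ∑ k, (rhat k - rs k) ^ 2 / q k with hBdef
      have hB : 0 ≤ B := Finset.sum_nonneg fun k _ => div_nonneg (sq_nonneg _) (hq k).le
      have hineq : ∀ t : ℝ, 0 < t → t ≤ 1 → t * A ≤ t ^ 2 / 2 * B := by
        intro t ht0 ht1
        have hmem' : (fun k => rs k + t * (rhat k - rs k)) ∈
            {r : Fin K → ℝ | Real.sqrt (∑ k, r k ^ 2) ≤ ρ} :=
          comb_mem' rs rhat t ρ ht0.le ht1 hmem hrhatmem
        have h := hmin hmem'
        simp only [Set.mem_setOf_eq] at h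
        have hexp : ∀ k, (rs k + t * (rhat k - rs k) - c k) ^ 2 / q k =
            (rs k - c k) ^ 2 / q k - 2 * t * ((rhat k - rs k) * xs k)
              + t ^ 2 * ((rhat k - rs k) ^ 2 / q k) := by
          intro k
          simp only [hxsdef]
          field_simp
          ring
        have hsum2 : ∑ k, (rs k + t * (rhat k - rs k) - c k) ^ 2 / q k =
            ∑ k, (rs k - c k) ^ 2 / q k - 2 * t * A + t ^ 2 * B := by
          rw [Finset.sum_congr rfl fun k _ => hexp k]
          rw [Finset.sum_add_distrib, Finset.sum_sub_distrib, ← Finset.mul_sum, ← Finset.mul_sum]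
        rw [hsum2] at h
        nlinarith [h]
      have hA : A ≤ 0 := by
        by_contra hc
        push_neg at hc
        set t := min 1 (A / (B + 1)) with htdef
        have ht0 : 0 < t := lt_min one_pos (by positivity)
        have ht1 : t ≤ 1 := min_le_left _ _
        have ht2 : t ≤ A / (B + 1) := min_le_right _ _
        have h := hineq t ht0 ht1
        have h3 : t * (B + 1) ≤ A := by
          rw [← le_div_iff₀ (by positivity : (0:ℝ) < B + 1)]
          exact ht2
        nlinarith [mul_pos ht0 ht0, mul_le_mul_of_nonneg_left h3 ht0.le]
      have hrx : ∑ k, rhat k * xs k = ρ * N := by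
        have : ∀ k, rhat k * xs k = ρ / N * xs k ^ 2 := by
          intro k; simp only [hrhatdef]; field_simp
        rw [Finset.sum_congr rfl fun k _ => this k, ← Finset.mul_sum, ← hNsq]
        field_simp
      have hsplit : ∑ k, (rhat k - rs k) * xs k =
          ∑ k, rhat k * xs k - ∑ k, rs k * xs k := by
        rw [← Finset.sum_sub_distrib]
        exact Finset.sum_congr rfl fun k _ => by ring
      rw [hAdef, hsplit, hrx] at hA
      linarith
  -- main weak-duality argument
  intro x _
  simp only [Set.mem_setOf_eq]
  have cs : ∑ k, rs k * x k ≤ ρ * Real.sqrt (∑ k, x k ^ 2) := by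
    calc ∑ k, rs k * x k ≤ Real.sqrt (∑ k, rs k ^ 2) * Real.sqrt (∑ k, x k ^ 2) := cs_sum' rs x
      _ ≤ ρ * Real.sqrt (∑ k, x k ^ 2) :=
        mul_le_mul_of_nonneg_right hmem (Real.sqrt_nonneg _)
  have hpoint : ∑ k, (-((c k - rs k) ^ 2 / (2 * q k))) ≤
      ∑ k, ((1 / 2) * (q k * x k ^ 2) - c k * x k + rs k * x k) := by
    refine Finset.sum_le_sum fun k _ => ?_
    have hqk := hq k
    have hid : (1 / 2) * (q k * x k ^ 2) - c k * x k + rs k * x k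
        + (c k - rs k) ^ 2 / (2 * q k) = (q k * x k - (c k - rs k)) ^ 2 / (2 * q k) := by
      field_simp
      ring
    have hnn : 0 ≤ (q k * x k - (c k - rs k)) ^ 2 / (2 * q k) :=
      div_nonneg (sq_nonneg _) (by linarith)
    linarith
  have hsumx : ∑ k, ((1 / 2) * (q k * x k ^ 2) - c k * x k + rs k * x k) =
      (1 / 2) * ∑ k, q k * x k ^ 2 - ∑ k, c k * x k + ∑ k, rs k * x k := by
    rw [Finset.sum_add_distrib, Finset.sum_sub_distrib, ← Finset.mul_sum]
  have hsumxs : (1 / 2) * ∑ k, q k * xs k ^ 2 - ∑ k, c k * xs k =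
      ∑ k, (-((c k - rs k) ^ 2 / (2 * q k))) - ∑ k, rs k * xs k := by
    rw [← Finset.sum_sub_distrib, Finset.mul_sum, ← Finset.sum_sub_distrib]
    refine Finset.sum_congr rfl fun k _ => ?_
    simp only [hxsdef]
    field_simp [hq' k]
    ring
  rw [← hNdef]
  rw [hsumxs]
  rw [hsumx] at hpoint
  linarith
end

section
/- Let q ∈ R^K with q_k > 0 for all k, c ∈ R^K with c_k ≠ 0 for all k, and ρ > 0 with ‖c‖_2 > ρ. If λ* ≥ 0 minimizes the dual objective h(λ) = Σ_k c_k² / (q_k + λ q_k²) + ρ² λ over {λ ≥ 0}, then r* defined componentwise by r_k* = c_k / (1 + λ* q_k) minimizes φ(r) = (1/2)(r − c)ᵀ diag(q)⁻¹ (r − c) over the Euclidean ball {r ∈ R^K : ‖r‖_2 ≤ ρ}. -/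
open Filter Topology Set

private lemma termDiff (q c l m : ℝ) (hq : 0 < q) (hl : 0 ≤ l) (hm : 0 ≤ m) :
    c ^ 2 / (q + m * q ^ 2) - c ^ 2 / (q + l * q ^ 2)
      = (l - m) * (c ^ 2 / ((1 + l * q) * (1 + m * q))) := by
  have h1 : (0:ℝ) < 1 + l * q := by positivity
  have h2 : (0:ℝ) < 1 + m * q := by positivity
  have h3 : q + l * q ^ 2 ≠ 0 := by nlinarith
  have h4 : q + m * q ^ 2 ≠ 0 := by nlinarith
  field_simp
  ring

private lemma quadMin (q c lam t : ℝ) (hq : 0 < q) (hlam : 0 ≤ lam) :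
    (c / (1 + lam * q) - c) ^ 2 / q + lam * (c / (1 + lam * q)) ^ 2
      ≤ (t - c) ^ 2 / q + lam * t ^ 2 := by
  have h1 : (0:ℝ) < 1 + lam * q := by positivity
  have key : (t - c) ^ 2 / q + lam * t ^ 2
      - ((c / (1 + lam * q) - c) ^ 2 / q + lam * (c / (1 + lam * q)) ^ 2)
      = ((1 + lam * q) / q) * (t - c / (1 + lam * q)) ^ 2 := by
    field_simp
    ring
  nlinarith [sq_nonneg (t - c / (1 + lam * q)), div_pos h1 hq,
    mul_nonneg (le_of_lt (div_pos h1 hq)) (sq_nonneg (t - c / (1 + lam * q)))]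

/-- if `λ* ≥ 0` minimizes the trust-region dual objective
`h(λ) = ∑ k, c k² / (q k + λ q k²) + ρ² λ` over `{λ ≥ 0}`, then `r*` defined by
`r*_k = c_k / (1 + λ* q_k)` minimizes the separable quadratic trust-region objective
`φ(r) = (1/2)(r − c)ᵀ diag(q)⁻¹ (r − c)` over the Euclidean ball `{r : ‖r‖₂ ≤ ρ}`. -/
theorem trust_region_from_dual_solution (K : ℕ) (q c : Fin K → ℝ)
    (hq : ∀ k, 0 < q k) (hc : ∀ k, c k ≠ 0)
    (ρ : ℝ) (hρ : 0 < ρ) (hcρ : ρ < Real.sqrt (∑ k, c k ^ 2))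
    (lam : ℝ) (hlam : 0 ≤ lam)
    (hmin : IsMinOn (fun l : ℝ => ∑ k, c k ^ 2 / (q k + l * q k ^ 2) + ρ ^ 2 * l)
      {l : ℝ | 0 ≤ l} lam) :
    (Real.sqrt (∑ k, (c k / (1 + lam * q k)) ^ 2) ≤ ρ) ∧
    IsMinOn (fun r : Fin K → ℝ => (1 / 2) * ∑ k, (r k - c k) ^ 2 / q k)
      {r : Fin K → ℝ | Real.sqrt (∑ k, r k ^ 2) ≤ ρ}
      (fun k => c k / (1 + lam * q k)) := by
  set F : ℝ → ℝ := fun m => ∑ k, c k ^ 2 / ((1 + lam * q k) * (1 + m * q k)) with hF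
  -- key difference identity
  have key : ∀ m : ℝ, 0 ≤ m →
      (∑ k, c k ^ 2 / (q k + m * q k ^ 2) + ρ ^ 2 * m)
        - (∑ k, c k ^ 2 / (q k + lam * q k ^ 2) + ρ ^ 2 * lam)
      = (m - lam) * (ρ ^ 2 - F m) := by
    intro m hm
    have : (∑ k, c k ^ 2 / (q k + m * q k ^ 2)) - (∑ k, c k ^ 2 / (q k + lam * q k ^ 2))
        = (lam - m) * F m := by
      rw [hF, Finset.mul_sum, ← Finset.sum_sub_distrib]
      exact Finset.sum_congr rfl fun k _ => termDiff (q k) (c k) lam m (hq k) hlam hm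
    nlinarith [this]
  -- minimality rephrased
  have hmin' : ∀ m : ℝ, 0 ≤ m →
      (∑ k, c k ^ 2 / (q k + lam * q k ^ 2) + ρ ^ 2 * lam)
        ≤ (∑ k, c k ^ 2 / (q k + m * q k ^ 2) + ρ ^ 2 * m) := by
    intro m hm
    exact hmin hm
  -- continuity of F at lam
  have hFcont : Tendsto F (𝓝 lam) (𝓝 (F lam)) := by
    rw [hF]
    apply tendsto_finset_sum
    intro k _
    have h1 : (0:ℝ) < 1 + lam * q k := by nlinarith [mul_nonneg hlam (hq k).le]
    have hne : (1 + lam * q k) * (1 + lam * q k) ≠ 0 := ne_of_gt (mul_pos h1 h1)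
    exact (ContinuousAt.div continuousAt_const (by fun_prop) hne)
  -- right: F lam ≤ ρ²
  have hrt : F lam ≤ ρ ^ 2 := by
    refine le_of_tendsto
      (hFcont.mono_left (nhdsWithin_le_nhds : 𝓝[>] lam ≤ 𝓝 lam)) ?_
    filter_upwards [self_mem_nhdsWithin] with m (hm : lam < m)
    have h0 : 0 ≤ m := le_of_lt (lt_of_le_of_lt hlam hm)
    have := hmin' m h0
    have hkey := key m h0
    nlinarith
  -- F lam equals the squared norm of r*
  have hFlam : F lam = ∑ k, (c k / (1 + lam * q k)) ^ 2 := by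
    rw [hF]
    refine Finset.sum_congr rfl fun k _ => ?_
    rw [div_pow]; ring
  -- lam > 0
  have hS : ρ ^ 2 < ∑ k, c k ^ 2 := by
    have := (Real.lt_sqrt hρ.le).mp hcρ
    linarith
  have hlampos : 0 < lam := by
    rcases lt_or_eq_of_le hlam with h | h
    · exact h
    · exfalso
      have : F lam = ∑ k, c k ^ 2 := by
        rw [hF]
        refine Finset.sum_congr rfl fun k _ => ?_
        rw [← h]
        norm_num
      linarith [hrt]
  -- left: ρ² ≤ F lam
  have hlt : ρ ^ 2 ≤ F lam := by
    refine ge_of_tendsto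
      (hFcont.mono_left (nhdsWithin_le_nhds : 𝓝[<] lam ≤ 𝓝 lam)) ?_
    filter_upwards [Ioo_mem_nhdsLT_of_mem (show lam ∈ Ioc 0 lam from ⟨hlampos, le_refl _⟩)]
      with m hm
    have h0 : 0 ≤ m := le_of_lt hm.1
    have := hmin' m h0
    have hkey := key m h0
    have hml : m - lam < 0 := by linarith [hm.2]
    nlinarith
  have hnorm : ∑ k, (c k / (1 + lam * q k)) ^ 2 = ρ ^ 2 := by
    rw [← hFlam]; linarith
  constructor
  · rw [hnorm, Real.sqrt_sq hρ.le]
  · rw [isMinOn_iff]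
    intro r hr
    have hr2 : ∑ k, r k ^ 2 ≤ ρ ^ 2 := by
      have h0 : 0 ≤ ∑ k, r k ^ 2 := by positivity
      have hs : Real.sqrt (∑ k, r k ^ 2) ≤ ρ := hr
      calc ∑ k, r k ^ 2 = Real.sqrt (∑ k, r k ^ 2) ^ 2 := (Real.sq_sqrt h0).symm
        _ ≤ ρ ^ 2 := pow_le_pow_left₀ (Real.sqrt_nonneg _) hs 2
    have hsum : (∑ k, (c k / (1 + lam * q k) - c k) ^ 2 / q k)
        + lam * ∑ k, (c k / (1 + lam * q k)) ^ 2
        ≤ (∑ k, (r k - c k) ^ 2 / q k) + lam * ∑ k, r k ^ 2 := by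
      rw [Finset.mul_sum, Finset.mul_sum, ← Finset.sum_add_distrib, ← Finset.sum_add_distrib]
      exact Finset.sum_le_sum fun k _ => quadMin (q k) (c k) lam (r k) (hq k) hlam
    have hmul : lam * (∑ k, r k ^ 2) ≤ lam * ρ ^ 2 :=
      mul_le_mul_of_nonneg_left hr2 hlam
    rw [hnorm] at hsum
    have : (∑ k, (c k / (1 + lam * q k) - c k) ^ 2 / q k) ≤ ∑ k, (r k - c k) ^ 2 / q k := by
      linarith
    linarith
end

section
/- Let q, c, b ∈ R^K with q_k > 0, c_k > 0, b_k > 0 for all k, let ρ > 0 and p > 1 with dual exponent p̄ defined by 1/p + 1/p̄ = 1. If r* minimizes the objective −Σ_k q_k log(r_k + c_k) − bᵀ r over the set {r ∈ R^K : r ≥ 0 componentwise, ‖r‖_{p̄} = ρ}, then z* defined componentwise by z_k* = b_k + q_k / (c_k + r_k*) maximizes Σ_k q_k log(z_k − b_k) − cᵀ z − ρ ‖z‖_p over {z ∈ R^K : z_k > b_k for all k}. -/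
open Real Finset

lemma aux_N_smul (K : ℕ) (pd : ℝ) (hpd : 0 < pd) (l : ℝ) (hl : 0 ≤ l) (w : Fin K → ℝ) :
    (∑ k, |l * w k| ^ pd) ^ (1/pd) = l * (∑ k, |w k| ^ pd) ^ (1/pd) := by
  have h1 : ∀ k : Fin K, |l * w k| ^ pd = l ^ pd * |w k| ^ pd := fun k => by
    rw [abs_mul, abs_of_nonneg hl, Real.mul_rpow hl (abs_nonneg _)]
  simp_rw [h1, ← Finset.mul_sum]
  rw [Real.mul_rpow (Real.rpow_nonneg hl pd)
      (Finset.sum_nonneg fun k _ => Real.rpow_nonneg (abs_nonneg _) _),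
    ← Real.rpow_mul hl, mul_one_div, div_self hpd.ne', Real.rpow_one]

lemma aux_logmax (qk a bk u : ℝ) (hq : 0 < qk) (ha : 0 < a) (hu : 0 < u) :
    qk * Real.log u - a * (u + bk) ≤ qk * Real.log (qk / a) - a * (qk / a + bk) := by
  have hus : (0:ℝ) < qk / a := div_pos hq ha
  have h2 := Real.log_le_sub_one_of_pos (show 0 < u / (qk/a) from div_pos hu hus)
  rw [Real.log_div hu.ne' hus.ne'] at h2
  have h3 : qk * (u / (qk/a)) = a * u := by field_simp
  have h4 : a * (qk / a) = qk := by field_simp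
  nlinarith [mul_le_mul_of_nonneg_left h2 hq.le]

/-- if `r*` minimizes `−∑ k q k log(r k + c k) − bᵀ r` over
`{r : r ≥ 0, ‖r‖_{p̄} = ρ}` (where `1/p + 1/p̄ = 1`), then `z*` defined by
`z*_k = b_k + q_k/(c_k + r*_k)` maximizes `∑ k q k log(z k − b k) − cᵀ z − ρ ‖z‖_p` over
`{z : z k > b k for all k}`. -/
theorem diagonal_update_from_dual (K : ℕ) (q c b : Fin K → ℝ)
    (hq : ∀ k, 0 < q k) (hc : ∀ k, 0 < c k) (hb : ∀ k, 0 < b k)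
    (ρ p pd : ℝ) (hρ : 0 < ρ) (hp : 1 < p) (hpd : 1 / p + 1 / pd = 1)
    (rs : Fin K → ℝ)
    (hmem : (∀ k, 0 ≤ rs k) ∧ (∑ k, |rs k| ^ pd) ^ (1 / pd) = ρ)
    (hmin : IsMinOn
      (fun r : Fin K → ℝ => -∑ k, q k * Real.log (r k + c k) - ∑ k, b k * r k)
      {r : Fin K → ℝ | (∀ k, 0 ≤ r k) ∧ (∑ k, |r k| ^ pd) ^ (1 / pd) = ρ} rs) :
    ((fun k => b k + q k / (c k + rs k)) ∈ {z : Fin K → ℝ | ∀ k, b k < z k}) ∧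
    IsMaxOn
      (fun z : Fin K → ℝ =>
        ∑ k, q k * Real.log (z k - b k) - ∑ k, c k * z k
          - ρ * (∑ k, |z k| ^ p) ^ (1 / p))
      {z : Fin K → ℝ | ∀ k, b k < z k}
      (fun k => b k + q k / (c k + rs k)) := by
  obtain ⟨hrs0, hrsN⟩ := hmem
  have hpq : Real.HolderConjugate p pd := Real.holderConjugate_iff.mpr ⟨hp, by rw [← one_div, ← one_div]; exact hpd⟩
  have hpdpos : 0 < pd := hpq.symm.pos
  have hpd1 : 1 ≤ pd := hpq.symm.lt.le
  have hppos : 0 < p := hpq.pos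
  have hcr : ∀ k, 0 < c k + rs k := fun k => by have := hc k; have := hrs0 k; linarith
  set z : Fin K → ℝ := fun k => b k + q k / (c k + rs k) with hzdef
  have hzb : ∀ k, b k < z k := fun k => by
    have : 0 < q k / (c k + rs k) := div_pos (hq k) (hcr k)
    simp only [hzdef]; linarith
  have hzpos : ∀ k, 0 < z k := fun k => lt_trans (hb k) (hzb k)
  set H : (Fin K → ℝ) → ℝ :=
    fun w => -∑ k, q k * Real.log (w k + c k) - ∑ k, b k * w k with hHdef
  set N : (Fin K → ℝ) → ℝ := fun w => (∑ k, |w k| ^ pd) ^ (1/pd) with hNdef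
  -- H is antitone on nonneg vectors
  have hHmono : ∀ w w' : Fin K → ℝ, (∀ k, 0 ≤ w k) → (∀ k, w k ≤ w' k) → H w' ≤ H w := by
    intro w w' hw hww
    apply sub_le_sub
    · apply neg_le_neg
      apply Finset.sum_le_sum
      intro k _
      apply mul_le_mul_of_nonneg_left _ (hq k).le
      apply Real.log_le_log (by have := hc k; have := hw k; linarith)
      linarith [hww k]
    · exact Finset.sum_le_sum fun k _ => mul_le_mul_of_nonneg_left (hww k) (hb k).le
  -- minimality over the ball
  have hball : ∀ w : Fin K → ℝ, (∀ k, 0 ≤ w k) → N w ≤ ρ → H rs ≤ H w := by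
    intro w hw hNw
    by_cases hw0 : ∀ k, w k = 0
    · have : ∀ k, w k ≤ rs k := fun k => (hw0 k) ▸ hrs0 k
      exact hHmono w rs hw this
    · push_neg at hw0
      obtain ⟨k0, hk0⟩ := hw0
      have hk0' : 0 < w k0 := lt_of_le_of_ne (hw k0) (Ne.symm hk0)
      have hNpos : 0 < N w := by
        apply Real.rpow_pos_of_pos
        apply lt_of_lt_of_le (Real.rpow_pos_of_pos (abs_pos.mpr hk0) pd)
        exact Finset.single_le_sum (fun k _ => Real.rpow_nonneg (abs_nonneg _) _)
          (Finset.mem_univ k0)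
      set l : ℝ := ρ / N w with hldef
      have hl1 : 1 ≤ l := (one_le_div hNpos).mpr hNw
      have hl0 : 0 ≤ l := le_trans zero_le_one hl1
      have hfeas : (∀ k, 0 ≤ l * w k) ∧ N (fun k => l * w k) = ρ := by
        constructor
        · exact fun k => mul_nonneg hl0 (hw k)
        · show (∑ k, |l * w k| ^ pd) ^ (1/pd) = ρ
          rw [aux_N_smul K pd hpdpos l hl0 w]
          show l * N w = ρ
          rw [hldef]; field_simp
      have h1 : H rs ≤ H (fun k => l * w k) := hmin hfeas
      have h2 : H (fun k => l * w k) ≤ H w :=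
        hHmono w _ hw fun k => le_mul_of_one_le_left (hw k) hl1
      linarith
  -- variational inequality
  have hvar : ∀ r : Fin K → ℝ, (∀ k, 0 ≤ r k) → N r ≤ ρ →
      ∑ k, z k * r k ≤ ∑ k, z k * rs k := by
    intro r hr hNr
    set d : Fin K → ℝ := fun k => r k - rs k with hddef
    set φ : ℝ → ℝ := fun t => -∑ k, q k * Real.log (rs k + t * d k + c k)
      - ∑ k, b k * (rs k + t * d k) with hφdef
    have hderiv : HasDerivAt φ (-∑ k, z k * d k) 0 := by
      have h1 : ∀ k ∈ (univ : Finset (Fin K)),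
          HasDerivAt (fun t : ℝ => q k * Real.log (rs k + t * d k + c k))
          (q k * (d k / (rs k + c k))) 0 := by
        intro k _
        have hlin : HasDerivAt (fun t : ℝ => rs k + t * d k + c k) (d k) 0 := by
          simpa using (((hasDerivAt_id (0:ℝ)).mul_const (d k)).const_add (rs k)).add_const (c k)
        have hne : rs k + 0 * d k + c k ≠ 0 := by
          have := hcr k; intro h; rw [zero_mul, add_zero] at h; linarith
        have := (hlin.log hne).const_mul (q k)
        simpa using this
      have h2 : ∀ k ∈ (univ : Finset (Fin K)),
          HasDerivAt (fun t : ℝ => b k * (rs k + t * d k)) (b k * d k) 0 := by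
        intro k _
        have := (((hasDerivAt_id (0:ℝ)).mul_const (d k)).const_add (rs k)).const_mul (b k)
        simpa using this
      have hS := ((HasDerivAt.sum h1).neg).sub (HasDerivAt.sum h2)
      have hc2 : (-∑ k, q k * (d k / (rs k + c k))) - ∑ k, b k * d k = -∑ k, z k * d k := by
        have he : ∀ k : Fin K, z k * d k = q k * (d k / (rs k + c k)) + b k * d k := by
          intro k
          rw [hzdef]
          simp only []
          rw [add_comm (rs k) (c k)]
          ring
        simp_rw [he, Finset.sum_add_distrib]
        ring
      rw [← hc2]
      have hfun : φ = (-∑ i, fun t => q i * Real.log (rs i + t * d i + c i)) - ∑ i, fun t => b i * (rs i + t * d i) := by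
        ext t; simp [hφdef, Finset.sum_apply]
      rw [hfun]
      exact hS
    have hφmin : ∀ t ∈ Set.Ioc (0:ℝ) 1, φ 0 ≤ φ t := by
      intro t ht
      have hrepr : ∀ k, rs k + t * d k = (1 - t) * rs k + t * r k := by
        intro k; simp only [hddef]; ring
      have hw : ∀ k, 0 ≤ rs k + t * d k := by
        intro k
        rw [hrepr k]
        have h1 : 0 ≤ 1 - t := by linarith [ht.2]
        exact add_nonneg (mul_nonneg h1 (hrs0 k)) (mul_nonneg ht.1.le (hr k))
      have hN : N (fun k => rs k + t * d k) ≤ ρ := by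
        rw [hNdef]
        simp only [hrepr]
        calc (∑ k, |(1 - t) * rs k + t * r k| ^ pd) ^ (1/pd)
            ≤ (∑ k, |(1 - t) * rs k| ^ pd) ^ (1/pd) + (∑ k, |t * r k| ^ pd) ^ (1/pd) :=
              Real.Lp_add_le univ _ _ hpd1
          _ = (1 - t) * (∑ k, |rs k| ^ pd) ^ (1/pd) + t * (∑ k, |r k| ^ pd) ^ (1/pd) := by
              rw [aux_N_smul K pd hpdpos (1 - t) (by linarith [ht.2]) rs,
                aux_N_smul K pd hpdpos t ht.1.le r]
          _ ≤ (1 - t) * ρ + t * ρ := by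
              have h1 : (∑ k, |rs k| ^ pd) ^ (1/pd) = ρ := hrsN
              have h2 : (∑ k, |r k| ^ pd) ^ (1/pd) ≤ ρ := hNr
              have h3 : 0 ≤ 1 - t := by linarith [ht.2]
              rw [h1]
              exact add_le_add le_rfl (mul_le_mul_of_nonneg_left h2 ht.1.le)
          _ = ρ := by ring
      have hres := hball _ hw hN
      have hφ0 : φ 0 = H rs := by rw [hφdef, hHdef]; simp
      have hφt : φ t = H (fun k => rs k + t * d k) := by rw [hφdef, hHdef]
      rw [hφ0, hφt]
      exact hres
    have hslope : Filter.Tendsto (fun t => (φ t - φ 0) / t) (nhdsWithin 0 (Set.Ioi 0))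
        (nhds (-∑ k, z k * d k)) := by
      have h := hasDerivAt_iff_tendsto_slope.mp hderiv
      have h2 : Filter.Tendsto (slope φ 0) (nhdsWithin 0 (Set.Ioi 0))
          (nhds (-∑ k, z k * d k)) :=
        h.mono_left (nhdsWithin_mono 0 fun x hx => ne_of_gt hx)
      refine h2.congr fun t => ?_
      rw [slope_def_field, sub_zero]
    have h0 : 0 ≤ -∑ k, z k * d k := by
      refine ge_of_tendsto hslope ?_
      filter_upwards [Ioc_mem_nhdsGT_of_mem
        (Set.mem_Ico.mpr ⟨le_refl (0:ℝ), zero_lt_one⟩)] with t ht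
      exact div_nonneg (by linarith [hφmin t ht]) ht.1.le
    have hsum : ∑ k, z k * d k = ∑ k, z k * r k - ∑ k, z k * rs k := by
      simp only [hddef, mul_sub]
      exact Finset.sum_sub_distrib _ _
    rw [hsum] at h0
    linarith
  -- key equality : ∑ z rs = ρ * ‖z‖_p
  have habsz : ∀ k, |z k| = z k := fun k => abs_of_pos (hzpos k)
  have hrsNd : (∑ k, rs k ^ pd) ^ (1/pd) = ρ := by
    rw [← hrsN]
    congr 1
    exact Finset.sum_congr rfl fun k _ => by rw [abs_of_nonneg (hrs0 k)]
  have heq : ∑ k, z k * rs k = ρ * (∑ k, z k ^ p) ^ (1/p) := by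
    rcases Nat.eq_zero_or_pos K with hK | hK
    · subst hK
      simp only [Finset.univ_eq_empty, Finset.sum_empty]
      rw [Real.zero_rpow (by positivity : (1:ℝ)/p ≠ 0), mul_zero]
    · have : Nonempty (Fin K) := ⟨⟨0, hK⟩⟩
      set T : ℝ := ∑ k, z k ^ p with hTdef
      have hT : 0 < T := by
        apply lt_of_lt_of_le (Real.rpow_pos_of_pos (hzpos (Classical.arbitrary _)) p)
        exact Finset.single_le_sum (fun k _ => Real.rpow_nonneg (hzpos k).le _)
          (Finset.mem_univ _)
      set S : ℝ := T ^ (1/p) with hSdef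
      have hS : 0 < S := Real.rpow_pos_of_pos hT _
      have hSp1 : 0 < S ^ (p - 1) := Real.rpow_pos_of_pos hS _
      set C : ℝ := ρ / S ^ (p - 1) with hCdef
      have hC : 0 < C := div_pos hρ hSp1
      -- the Hölder-equality point
      set rh : Fin K → ℝ := fun k => C * z k ^ (p - 1) with hrhdef
      have hrh0 : ∀ k, 0 ≤ rh k := fun k =>
        mul_nonneg hC.le (Real.rpow_nonneg (hzpos k).le _)
      have hexp : 1/p * (p - 1) = 1/pd := by
        have h1 : (1:ℝ)/pd = 1 - 1/p := by linarith
        rw [h1]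
        field_simp
      have hTS : T ^ ((1:ℝ)/pd) = S ^ (p - 1) := by
        rw [hSdef, ← Real.rpow_mul hT.le, hexp]
      have hNrh : N rh = ρ := by
        rw [hNdef]
        simp only [hrhdef]
        rw [aux_N_smul K pd hpdpos C hC.le]
        have hzz : ∀ k : Fin K, |z k ^ (p-1)| ^ pd = z k ^ p := by
          intro k
          rw [abs_of_nonneg (Real.rpow_nonneg (hzpos k).le _),
            ← Real.rpow_mul (hzpos k).le, hpq.sub_one_mul_conj]
        simp_rw [hzz]
        rw [← hTdef, hTS, hCdef]
        field_simp
      have hinner : ∑ k, z k * rh k = ρ * S := by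
        have h1 : ∀ k : Fin K, z k * rh k = C * z k ^ p := by
          intro k
          simp only [hrhdef]
          rw [show z k * (C * z k ^ (p-1)) = C * (z k ^ (1:ℝ) * z k ^ (p-1)) by
            rw [Real.rpow_one]; ring, ← Real.rpow_add (hzpos k)]
          norm_num
        simp_rw [h1]
        rw [← Finset.mul_sum, ← hTdef, hCdef]
        have hST : S ^ (p - 1) * S = T := by
          rw [show S ^ (p-1) * S = S ^ (p-1) * S ^ (1:ℝ) by rw [Real.rpow_one],
            ← Real.rpow_add hS, sub_add_cancel, hSdef, ← Real.rpow_mul hT.le,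
            one_div_mul_cancel hppos.ne', Real.rpow_one]
        field_simp
        nlinarith [hST]
      have hHolder : ∑ k, z k * rs k ≤ (∑ k, z k ^ p) ^ (1/p) * (∑ k, rs k ^ pd) ^ (1/pd) :=
        Real.inner_le_Lp_mul_Lq_of_nonneg univ hpq (fun k _ => (hzpos k).le)
          (fun k _ => hrs0 k)
      rw [hrsNd, ← hTdef] at hHolder
      have hle : ρ * S ≤ ∑ k, z k * rs k := by
        rw [← hinner]
        exact hvar rh hrh0 (le_of_eq hNrh)
      have : ∑ k, z k * rs k = ρ * S := le_antisymm (by rw [mul_comm ρ S] at *; exact hHolder) hle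
      rw [this, hSdef, hTdef]
  -- final assembly
  refine ⟨hzb, ?_⟩
  rw [isMaxOn_iff]
  intro z' hz'
  simp only [Set.mem_setOf_eq] at hz'
  have hz'pos : ∀ k, 0 < z' k := fun k => lt_trans (hb k) (hz' k)
  have halg : ∀ w : Fin K → ℝ,
      ∑ k, (q k * Real.log (w k - b k) - (c k + rs k) * w k)
        = ∑ k, q k * Real.log (w k - b k) - ∑ k, c k * w k - ∑ k, rs k * w k := by
    intro w
    rw [Finset.sum_sub_distrib, sub_sub]
    congr 1
    rw [← Finset.sum_add_distrib]
    exact Finset.sum_congr rfl fun k _ => by ring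
  -- Step A : Hölder for z'
  have hA : ∑ k, rs k * z' k ≤ ρ * (∑ k, |z' k| ^ p) ^ (1/p) := by
    have h := Real.inner_le_Lp_mul_Lq_of_nonneg univ hpq.symm
      (fun k _ => hrs0 k) (fun k (_ : k ∈ univ) => (hz'pos k).le)
    have habs : ∀ k : Fin K, z' k ^ p = |z' k| ^ p := fun k => by
      rw [abs_of_pos (hz'pos k)]
    simp_rw [habs] at h
    rw [hrsNd] at h
    exact h
  -- Step B : per-coordinate maximization
  have hB : ∀ k : Fin K,
      q k * Real.log (z' k - b k) - (c k + rs k) * z' k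
        ≤ q k * Real.log (z k - b k) - (c k + rs k) * z k := by
    intro k
    have hu : 0 < z' k - b k := sub_pos.mpr (hz' k)
    have hzk : z k = q k / (c k + rs k) + b k := by
      simp only [hzdef]; ring
    have h := aux_logmax (q k) (c k + rs k) (b k) (z' k - b k) (hq k) (hcr k) hu
    rw [sub_add_cancel] at h
    rw [hzk]
    have : q k / (c k + rs k) + b k - b k = q k / (c k + rs k) := by ring
    rw [this]
    exact h
  -- chain
  have key : ∑ k, q k * Real.log (z' k - b k) - ∑ k, c k * z' k
      - ρ * (∑ k, |z' k| ^ p) ^ (1/p)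
      ≤ ∑ k, q k * Real.log (z k - b k) - ∑ k, c k * z k
      - ρ * (∑ k, |z k| ^ p) ^ (1/p) := by
    have step1 : ∑ k, q k * Real.log (z' k - b k) - ∑ k, c k * z' k
        - ρ * (∑ k, |z' k| ^ p) ^ (1/p)
        ≤ ∑ k, q k * Real.log (z' k - b k) - ∑ k, c k * z' k - ∑ k, rs k * z' k := by
      linarith [hA]
    have step2 : ∑ k, q k * Real.log (z' k - b k) - ∑ k, c k * z' k - ∑ k, rs k * z' k
        ≤ ∑ k, q k * Real.log (z k - b k) - ∑ k, c k * z k - ∑ k, rs k * z k := by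
      rw [← halg z', ← halg z]
      exact Finset.sum_le_sum fun k _ => hB k
    have step3 : ∑ k, q k * Real.log (z k - b k) - ∑ k, c k * z k - ∑ k, rs k * z k
        = ∑ k, q k * Real.log (z k - b k) - ∑ k, c k * z k
          - ρ * (∑ k, |z k| ^ p) ^ (1/p) := by
      have h1 : ∑ k, rs k * z k = ∑ k, z k * rs k :=
        Finset.sum_congr rfl fun k _ => mul_comm _ _
      have h2 : (∑ k, |z k| ^ p) = (∑ k, z k ^ p) :=
        Finset.sum_congr rfl fun k _ => by rw [habsz k]
      rw [h1, heq, h2]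
    linarith
  exact key
end

section
/- Let q, c, b ∈ R^K with q_k > 0, c_k > 0, b_k > 0 for all k, and let ρ > 0. For ν > max_k b_k define r(ν) ∈ R^K componentwise by r_k(ν) = max(0, q_k/(ν − b_k) − c_k). If ν > max_k b_k satisfies Σ_k r_k(ν) = ρ, then r(ν) is the minimizer of the continuous logarithmic knapsack objective −Σ_k q_k log(r_k + c_k) − bᵀ r over the set {r ∈ R^K : r ≥ 0 componentwise, Σ_k r_k = ρ}. -/
/-- with `r_k(ν) = max(0, q_k/(ν − b_k) − c_k)` for `ν > max_k b_k`, if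
`∑ k r_k(ν) = ρ` then `r(ν)` minimizes the continuous logarithmic knapsack objective
`−∑ k q k log(r k + c k) − bᵀ r` over `{r : r ≥ 0, ∑ k r k = ρ}`. -/
theorem log_knapsack_piecewise_solution (K : ℕ) (q c b : Fin K → ℝ)
    (hq : ∀ k, 0 < q k) (hc : ∀ k, 0 < c k) (hb : ∀ k, 0 < b k)
    (ρ : ℝ) (hρ : 0 < ρ)
    (ν : ℝ) (hν : ∀ k, b k < ν)
    (hsum : ∑ k, max 0 (q k / (ν - b k) - c k) = ρ) :
    ((∀ k, (0 : ℝ) ≤ max 0 (q k / (ν - b k) - c k)) ∧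
      ∑ k, max 0 (q k / (ν - b k) - c k) = ρ) ∧
    IsMinOn
      (fun r : Fin K → ℝ => -∑ k, q k * Real.log (r k + c k) - ∑ k, b k * r k)
      {r : Fin K → ℝ | (∀ k, 0 ≤ r k) ∧ ∑ k, r k = ρ}
      (fun k => max 0 (q k / (ν - b k) - c k)) := by
  set rs : Fin K → ℝ := fun k => max 0 (q k / (ν - b k) - c k) with hrs
  refine ⟨⟨fun k => le_max_left _ _, hsum⟩, ?_⟩
  intro r hr
  obtain ⟨hr0, hrρ⟩ := hr
  have key : ∀ k ∈ Finset.univ, q k * Real.log (r k + c k) + b k * r k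
      ≤ q k * Real.log (rs k + c k) + b k * rs k + ν * (r k - rs k) := by
    intro k _
    have hνb : 0 < ν - b k := sub_pos.2 (hν k)
    have hv : 0 < rs k + c k := add_pos_of_nonneg_of_pos (le_max_left _ _) (hc k)
    have hu : 0 < r k + c k := add_pos_of_nonneg_of_pos (hr0 k) (hc k)
    have hlog : Real.log (r k + c k) - Real.log (rs k + c k)
        ≤ (r k - rs k) / (rs k + c k) := by
      have h1 := Real.log_le_sub_one_of_pos (div_pos hu hv)
      rw [Real.log_div hu.ne' hv.ne'] at h1
      calc Real.log (r k + c k) - Real.log (rs k + c k)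
          ≤ (r k + c k) / (rs k + c k) - 1 := h1
        _ = (r k - rs k) / (rs k + c k) := by field_simp; ring
    have hstep : q k * Real.log (r k + c k) ≤ q k * Real.log (rs k + c k)
        + q k / (rs k + c k) * (r k - rs k) := by
      have h2 := mul_le_mul_of_nonneg_left hlog (hq k).le
      have h3 : q k * ((r k - rs k) / (rs k + c k))
          = q k / (rs k + c k) * (r k - rs k) := by field_simp
      linarith [h2, h3.le]
    have hslack : q k / (rs k + c k) * (r k - rs k) + b k * (r k - rs k)
        ≤ ν * (r k - rs k) := by
      rcases le_or_gt (q k / (ν - b k) - c k) 0 with h | h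
      · have hrs0 : rs k = 0 := max_eq_left h
        have hqle : q k ≤ c k * (ν - b k) := by
          have h4 := sub_nonpos.1 h
          rw [div_le_iff₀ hνb] at h4
          linarith [h4]
        have hqc : q k / c k ≤ ν - b k := (div_le_iff₀ (hc k)).2 (by linarith)
        rw [hrs0]
        simp only [zero_add, sub_zero]
        nlinarith [hr0 k, hqc]
      · have hrs0 : rs k = q k / (ν - b k) - c k := max_eq_right h.le
        have hvq : rs k + c k = q k / (ν - b k) := by rw [hrs0]; ring
        have hd : q k / (rs k + c k) = ν - b k := by
          rw [hvq]; field_simp; exact div_self (hq k).ne'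
        rw [hd]; ring_nf; rfl
    linarith [hstep, hslack]
  have hsum2 : ∑ k, (q k * Real.log (r k + c k) + b k * r k)
      ≤ ∑ k, (q k * Real.log (rs k + c k) + b k * rs k + ν * (r k - rs k)) :=
    Finset.sum_le_sum key
  have hνsum : ∑ k, ν * (r k - rs k) = 0 := by
    rw [← Finset.mul_sum, Finset.sum_sub_distrib, hrρ, hsum]
    ring
  simp only [Finset.sum_add_distrib] at hsum2
  rw [hνsum] at hsum2
  show -∑ k, q k * Real.log (rs k + c k) - ∑ k, b k * rs k
      ≤ -∑ k, q k * Real.log (r k + c k) - ∑ k, b k * r k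
  linarith [hsum2]
end

section
/- Let q, c, b ∈ R^K with q_k > 0, c_k > 0, b_k > 0 for all k, and let ρ > 0. For λ > 0 define r(λ) ∈ R^K componentwise by r_k(λ) = (b_k − λ c_k + sqrt((b_k + λ c_k)² + 4 λ q_k)) / (2λ); each r_k(λ) is strictly positive. If λ > 0 satisfies ‖r(λ)‖_2 = ρ, then r(λ) minimizes the separable logarithmic trust-region objective −Σ_k q_k log(r_k + c_k) − bᵀ r over the set {r ∈ R^K : r ≥ 0 componentwise, ‖r‖_2 ≤ ρ}. -/
/-- with `r_k(λ) = (b_k − λ c_k + sqrt((b_k + λ c_k)² + 4 λ q_k))/(2λ)` for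
`λ > 0`: each `r_k(λ)` is strictly positive, and if `‖r(λ)‖₂ = ρ` then `r(λ)` minimizes the
separable logarithmic trust-region objective `−∑ k q k log(r k + c k) − bᵀ r` over
`{r : r ≥ 0, ‖r‖₂ ≤ ρ}`. -/
theorem log_trust_region_solution (K : ℕ) (q c b : Fin K → ℝ)
    (hq : ∀ k, 0 < q k) (hc : ∀ k, 0 < c k) (hb : ∀ k, 0 < b k)
    (ρ : ℝ) (hρ : 0 < ρ) (lam : ℝ) (hlam : 0 < lam) :
    (∀ k, 0 < (b k - lam * c k + Real.sqrt ((b k + lam * c k) ^ 2 + 4 * lam * q k))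
        / (2 * lam)) ∧
    (Real.sqrt (∑ k, ((b k - lam * c k +
          Real.sqrt ((b k + lam * c k) ^ 2 + 4 * lam * q k)) / (2 * lam)) ^ 2) = ρ →
      ((∀ k, (0 : ℝ) ≤ (b k - lam * c k +
            Real.sqrt ((b k + lam * c k) ^ 2 + 4 * lam * q k)) / (2 * lam)) ∧
        Real.sqrt (∑ k, ((b k - lam * c k +
            Real.sqrt ((b k + lam * c k) ^ 2 + 4 * lam * q k)) / (2 * lam)) ^ 2) ≤ ρ) ∧
      IsMinOn
        (fun r : Fin K → ℝ => -∑ k, q k * Real.log (r k + c k) - ∑ k, b k * r k)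
        {r : Fin K → ℝ | (∀ k, 0 ≤ r k) ∧ Real.sqrt (∑ k, r k ^ 2) ≤ ρ}
        (fun k => (b k - lam * c k +
            Real.sqrt ((b k + lam * c k) ^ 2 + 4 * lam * q k)) / (2 * lam))) := by
  set s : Fin K → ℝ := fun k =>
    (b k - lam * c k + Real.sqrt ((b k + lam * c k) ^ 2 + 4 * lam * q k)) / (2 * lam)
    with hs_def
  have hDnn : ∀ k, (0:ℝ) ≤ (b k + lam * c k) ^ 2 + 4 * lam * q k := by
    intro k; nlinarith [hq k, hlam, sq_nonneg (b k + lam * c k)]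
  have hsqrt_gt : ∀ k, b k + lam * c k <
      Real.sqrt ((b k + lam * c k) ^ 2 + 4 * lam * q k) := by
    intro k
    have h1 : (0:ℝ) ≤ b k + lam * c k := by nlinarith [hb k, hc k, hlam]
    have h2 := Real.sqrt_lt_sqrt (sq_nonneg (b k + lam * c k))
      (show (b k + lam * c k) ^ 2 < (b k + lam * c k) ^ 2 + 4 * lam * q k by
        nlinarith [hq k, hlam])
    rwa [Real.sqrt_sq h1] at h2
  have hspos : ∀ k, 0 < s k := by
    intro k
    apply div_pos _ (by linarith)
    have := hsqrt_gt k
    nlinarith [hb k]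
  -- stationarity: lam * s * (s + c) = q + b * (s + c)
  have hquad : ∀ k, lam * s k * (s k + c k) = q k + b k * (s k + c k) := by
    intro k
    have hsq : Real.sqrt ((b k + lam * c k) ^ 2 + 4 * lam * q k) ^ 2
        = (b k + lam * c k) ^ 2 + 4 * lam * q k := Real.sq_sqrt (hDnn k)
    have h2 : s k = (b k - lam * c k +
        Real.sqrt ((b k + lam * c k) ^ 2 + 4 * lam * q k)) / (2 * lam) := rfl
    rw [h2]
    field_simp
    rw [show (4:ℝ) * lam * q k = lam * 4 * q k by ring] at hsq
    nlinarith [hsq]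
  refine ⟨hspos, fun hnorm => ?_⟩
  refine ⟨⟨fun k => (hspos k).le, hnorm.le⟩, ?_⟩
  rw [isMinOn_iff]
  rintro r ⟨hr0, hrn⟩
  have hsum_s : ∑ k, s k ^ 2 = ρ ^ 2 := by
    have h := congrArg (· ^ 2) hnorm
    rw [Real.sq_sqrt (Finset.sum_nonneg fun k _ => sq_nonneg (s k))] at h
    exact h
  have hsum_r : ∑ k, r k ^ 2 ≤ ρ ^ 2 := by
    have h1 : (0:ℝ) ≤ ∑ k, r k ^ 2 := Finset.sum_nonneg fun k _ => sq_nonneg _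
    nlinarith [Real.sq_sqrt h1, Real.sqrt_nonneg (∑ k, r k ^ 2), hrn]
  -- Cauchy-Schwarz
  have hCS : (∑ k, s k * r k) ^ 2 ≤ (∑ k, s k ^ 2) * (∑ k, r k ^ 2) := by
    exact Finset.sum_mul_sq_le_sq_mul_sq Finset.univ s r
  have hsr_nn : 0 ≤ ∑ k, s k * r k :=
    Finset.sum_nonneg fun k _ => mul_nonneg (hspos k).le (hr0 k)
  have hsr : ∑ k, s k * r k ≤ ∑ k, s k ^ 2 := by
    nlinarith [hCS, hsum_s, hsum_r, hρ]
  -- componentwise convexity bound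
  have hkey : ∀ k, q k * Real.log (r k + c k) + b k * r k ≤
      q k * Real.log (s k + c k) + b k * s k + lam * s k * (r k - s k) := by
    intro k
    have hsc : 0 < s k + c k := by linarith [hspos k, hc k]
    have hrc : 0 < r k + c k := by linarith [hr0 k, hc k]
    have hlog : Real.log (r k + c k) - Real.log (s k + c k) ≤
        (r k - s k) / (s k + c k) := by
      have h := Real.log_le_sub_one_of_pos (div_pos hrc hsc)
      rw [Real.log_div hrc.ne' hsc.ne'] at h
      have heq : (r k + c k) / (s k + c k) - 1 = (r k - s k) / (s k + c k) := by
        field_simp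
        ring
      linarith [heq ▸ h]
    have hq' := mul_le_mul_of_nonneg_left hlog (hq k).le
    have heq2 : q k * ((r k - s k) / (s k + c k)) = (lam * s k - b k) * (r k - s k) := by
      have hqe : q k = (lam * s k - b k) * (s k + c k) := by
        linear_combination -hquad k
      rw [hqe]; field_simp
    rw [heq2] at hq'
    nlinarith [hq']
  have hsum_key : ∑ k, (q k * Real.log (r k + c k) + b k * r k) ≤
      ∑ k, (q k * Real.log (s k + c k) + b k * s k + lam * s k * (r k - s k)) :=
    Finset.sum_le_sum fun k _ => hkey k
  have hexp1 : ∑ k, (q k * Real.log (r k + c k) + b k * r k) =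
      (∑ k, q k * Real.log (r k + c k)) + ∑ k, b k * r k := by
    rw [Finset.sum_add_distrib]
  have hexp2 : ∑ k, (q k * Real.log (s k + c k) + b k * s k + lam * s k * (r k - s k)) =
      (∑ k, q k * Real.log (s k + c k)) + (∑ k, b k * s k)
        + lam * ((∑ k, s k * r k) - ∑ k, s k ^ 2) := by
    rw [Finset.sum_add_distrib, Finset.sum_add_distrib]
    congr 1
    rw [mul_sub, Finset.mul_sum, Finset.mul_sum, ← Finset.sum_sub_distrib]
    exact Finset.sum_congr rfl fun k _ => by ring
  have hslack : lam * ((∑ k, s k * r k) - ∑ k, s k ^ 2) ≤ 0 := by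
    have : (∑ k, s k * r k) - ∑ k, s k ^ 2 ≤ 0 := by linarith
    exact mul_nonpos_of_nonneg_of_nonpos hlam.le this
  rw [hexp1, hexp2] at hsum_key
  linarith
end
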